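/- arXiv:2602.14204 — 8 statements merged into one kernel-verified Lean document; each statement's English description precedes it below -/
import Mathlib

section
/- Let m > n > 0 be positive integers with gcd(m,n) = 1. Then the polynomial x^m + x^n ∈ ℂ[x] is indecomposable: whenever x^m + x^n = g(h(x)) for polynomials g, h ∈ ℂ[x], either g or h has degree 1. -/
open Polynomial

private lemma xm_aux_comp_C_mul_X_coeff' (p : ℂ[X]) (w : ℂ) (j : ℕ) :
    (p.comp (C w * X)).coeff j = w ^ j * p.coeff j := by
  induction p using Polynomial.induction_on' with
  | add p q hp hq => simp [add_comp, hp, hq, mul_add]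
  | monomial i a =>
      rw [← C_mul_X_pow_eq_monomial, mul_comp, C_comp, pow_comp, X_comp, mul_pow, ← C_pow,
        ← mul_assoc, ← C_mul]
      simp only [coeff_C_mul, coeff_X_pow]
      by_cases hij : j = i <;> simp [hij, mul_comm, mul_assoc, mul_left_comm]

private lemma xm_aux_comp_C_mul_X_pow_coeff' (p : ℂ[X]) (c : ℂ) (e j : ℕ) (hj : ¬ e ∣ j) :
    (p.comp (C c * X ^ e)).coeff j = 0 := by
  induction p using Polynomial.induction_on' with
  | add p q hp hq => simp [add_comp, hp, hq]
  | monomial i a =>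
      rw [← C_mul_X_pow_eq_monomial, mul_comp, C_comp, pow_comp, X_comp, mul_pow, ← C_pow,
        ← pow_mul, ← mul_assoc, ← C_mul]
      rw [coeff_C_mul, coeff_X_pow]
      have : e * i ≠ j := fun hh => hj ⟨i, hh.symm⟩
      simp [Ne.symm this]


private lemma xm_aux_uniq' {g1 g2 h1 h2 : ℂ[X]} {d e : ℕ} (hd : 0 < d)
    (hg1 : g1.Monic) (hg2 : g2.Monic) (hh1 : h1.Monic) (hh2 : h2.Monic)
    (hg1d : g1.natDegree = d) (hg2d : g2.natDegree = d)
    (hh1e : h1.natDegree = e) (hh2e : h2.natDegree = e)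
    (h10 : h1.coeff 0 = 0) (h20 : h2.coeff 0 = 0)
    (heq : g1.comp h1 = g2.comp h2) : h1 = h2 := by
  -- the geometric sum
  set S : ℂ[X] := ∑ i ∈ Finset.range d, h1 ^ i * h2 ^ (d - 1 - i) with hS
  have hterm : ∀ i ∈ Finset.range d, (h1 ^ i * h2 ^ (d - 1 - i)).natDegree = (d-1) * e := by
    intro i hi
    rw [Finset.mem_range] at hi
    rw [natDegree_mul (pow_ne_zero _ hh1.ne_zero) (pow_ne_zero _ hh2.ne_zero),
      natDegree_pow, natDegree_pow, hh1e, hh2e]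
    have : i + (d - 1 - i) = d - 1 := by omega
    rw [← add_mul, this]
  have hScoeff : S.coeff ((d-1) * e) = (d : ℂ) := by
    rw [hS, finset_sum_coeff]
    have : ∀ i ∈ Finset.range d, (h1 ^ i * h2 ^ (d - 1 - i)).coeff ((d-1)*e) = 1 := by
      intro i hi
      have hm : (h1 ^ i * h2 ^ (d - 1 - i)).Monic := (hh1.pow _).mul (hh2.pow _)
      have := hm.coeff_natDegree
      rwa [hterm i hi] at this
    rw [Finset.sum_congr rfl this]
    simp
  have hSdeg : S.natDegree ≤ (d-1) * e := by
    apply natDegree_sum_le_of_forall_le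
    intro i hi
    exact le_of_eq (hterm i hi)
  have hSne : S ≠ 0 := by
    intro h0
    have : (d : ℂ) = 0 := by rw [← hScoeff, h0, coeff_zero]
    exact_mod_cast hd.ne' (by exact_mod_cast this)
  have hSdeg' : (d-1) * e ≤ S.natDegree := le_natDegree_of_ne_zero (by rw [hScoeff]; exact_mod_cast hd.ne')
  -- difference of powers
  have hgeom : (h1 - h2) * S = h1 ^ d - h2 ^ d := by
    have := geom_sum₂_mul h1 h2 d
    rw [hS]; linear_combination this
  -- degree bound on h1^d - h2^d
  have hbound : ∀ (g h : ℂ[X]), g.Monic → g.natDegree = d → h.natDegree = e →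
      (g.comp h - h ^ d).natDegree ≤ (d-1) * e := by
    intro g h hg hgd hhe
    have : g.comp h - h ^ d = (g - X ^ d).comp h := by
      rw [sub_comp, X_pow_comp]
    rw [this, natDegree_comp, hhe]
    apply Nat.mul_le_mul_right
    by_cases hzero : g - X ^ d = 0
    · simp [hzero]
    · have hdeq : g.degree = (d : WithBot ℕ) := by
        rw [degree_eq_natDegree hg.ne_zero, hgd]
      have hlt : (g - X ^ d).degree < (d : WithBot ℕ) := by
        have := degree_sub_lt (q := X ^ d) (by rw [hdeq, degree_X_pow]) hg.ne_zero
          (by rw [hg.leadingCoeff, leadingCoeff_X_pow])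
        rwa [hdeq] at this
      have := (natDegree_lt_iff_degree_lt hzero).mpr hlt
      omega
  have hdiffdeg : (h1 ^ d - h2 ^ d).natDegree ≤ (d-1) * e := by
    have h1b := hbound g1 h1 hg1 hg1d hh1e
    have h2b := hbound g2 h2 hg2 hg2d hh2e
    have : h1 ^ d - h2 ^ d = (g2.comp h2 - h2 ^ d) - (g1.comp h1 - h1 ^ d) := by
      rw [heq]; ring
    rw [this]
    exact le_trans (natDegree_sub_le _ _) (max_le h2b h1b)
  -- conclude
  by_contra hne
  have hne' : h1 - h2 ≠ 0 := sub_ne_zero_of_ne hne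
  have : (h1 - h2).natDegree + S.natDegree ≤ (d-1) * e := by
    rw [← natDegree_mul hne' hSne, hgeom]; exact hdiffdeg
  have hdeg0 : (h1 - h2).natDegree = 0 := by omega
  have : h1 - h2 = C ((h1 - h2).coeff 0) := eq_C_of_natDegree_eq_zero hdeg0
  rw [coeff_sub, h10, h20, sub_zero, map_zero] at this
  exact hne' this

private lemma xm_aux_decomp (p : ℂ[X]) (hp : p ≠ 0) :
    ∃ u : ℂ[X], p = X ^ (rootMultiplicity 0 p) * u ∧ u.eval 0 ≠ 0 := by
  refine ⟨p /ₘ (X - C 0) ^ (rootMultiplicity 0 p), ?_,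
    eval_divByMonic_pow_rootMultiplicity_ne_zero 0 hp⟩
  have h2 := pow_mul_divByMonic_rootMultiplicity_eq p 0
  conv_lhs => rw [← h2]
  rw [C_0, sub_zero]

private lemma xm_aux_rootMult_X_pow_mul' (N : ℕ) (w : ℂ[X]) (hw : w.eval 0 ≠ 0) :
    rootMultiplicity 0 (X ^ N * w) = N := by
  have hw0 : w ≠ 0 := fun h => hw (by simp [h])
  have hX : (X : ℂ[X]) ^ N ≠ 0 := pow_ne_zero _ X_ne_zero
  rw [rootMultiplicity_mul (mul_ne_zero hX hw0)]
  have h1 : rootMultiplicity 0 ((X : ℂ[X]) ^ N) = N := by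
    have := rootMultiplicity_X_sub_C_pow (0 : ℂ) N
    simpa using this
  have h2 : rootMultiplicity 0 w = 0 :=
    rootMultiplicity_eq_zero (by simpa [IsRoot] using hw)
  omega

private lemma xm_aux_main (m n : ℕ) (hn : 0 < n) (hnm : n < m)
    (hgcd : Nat.gcd m n = 1) (g h : ℂ[X]) (hh : h.Monic) (h00 : h.coeff 0 = 0)
    (hcomp : (X ^ m + X ^ n : ℂ[X]) = g.comp h) :
    g.natDegree = 1 ∨ h.natDegree = 1 := by
  have hq0 : m - n ≠ 0 := by omega
  have hffact : (X ^ m + X ^ n : ℂ[X]) = X ^ n * (X ^ (m - n) + 1) := by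
    rw [mul_add, mul_one, ← pow_add]
    congr 2
    omega
  have hdlt : (X ^ n : ℂ[X]).degree < (X ^ m : ℂ[X]).degree := by
    rw [degree_X_pow, degree_X_pow]; exact_mod_cast hnm
  have hfmonic : (X ^ m + X ^ n : ℂ[X]).Monic := (monic_X_pow m).add_of_left hdlt
  have hfne : (X ^ m + X ^ n : ℂ[X]) ≠ 0 := hfmonic.ne_zero
  have hfdeg : (X ^ m + X ^ n : ℂ[X]).natDegree = m :=
    natDegree_eq_of_degree_eq_some (by rw [degree_add_eq_left_of_degree_lt hdlt, degree_X_pow])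
  set d := g.natDegree with hd_def
  set e := h.natDegree with he_def
  have hde : d * e = m := by rw [hd_def, he_def, ← natDegree_comp, ← hcomp, hfdeg]
  have hgne : g ≠ 0 := fun h0 => hfne (by rw [hcomp, h0, zero_comp])
  have hd1 : 0 < d := by
    rcases Nat.eq_zero_or_pos d with h0 | h0
    · rw [h0, zero_mul] at hde; omega
    · exact h0
  have he1 : 0 < e := by
    rcases Nat.eq_zero_or_pos e with h0 | h0
    · rw [h0, mul_zero] at hde; omega
    · exact h0
  set k := rootMultiplicity 0 g with hk_def
  set r := rootMultiplicity 0 h with hr_def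
  obtain ⟨u, hgu, hu0⟩ := xm_aux_decomp g hgne
  obtain ⟨v, hhv, hv0⟩ := xm_aux_decomp h hh.ne_zero
  rw [← hk_def] at hgu
  rw [← hr_def] at hhv
  have hvne : v ≠ 0 := fun h0 => hv0 (by simp [h0])
  have hheval0 : h.eval 0 = 0 := by rw [← coeff_zero_eq_eval_zero, h00]
  have hpow : h ^ k = X ^ (k * r) * v ^ k := by
    rw [hhv, mul_pow, ← pow_mul, mul_comm r k]
  have hcompfact : g.comp h = X ^ (k * r) * (v ^ k * u.comp h) := by
    conv_lhs => rw [hgu, mul_comp, X_pow_comp]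
    rw [hpow, mul_assoc]
  have htail : (v ^ k * u.comp h).eval 0 ≠ 0 := by
    rw [eval_mul, eval_pow, eval_comp, hheval0]
    exact mul_ne_zero (pow_ne_zero _ hv0) hu0
  have hnkr : n = k * r := by
    have h1 : rootMultiplicity 0 (X ^ m + X ^ n : ℂ[X]) = n := by
      rw [hffact]
      apply xm_aux_rootMult_X_pow_mul'
      simp [zero_pow hq0]
    have h2 : rootMultiplicity 0 (X ^ m + X ^ n : ℂ[X]) = k * r := by
      rw [hcomp, hcompfact]
      exact xm_aux_rootMult_X_pow_mul' _ _ htail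
    omega
  have hkpos : 0 < k := by
    rcases Nat.eq_zero_or_pos k with h0 | h0
    · rw [h0, zero_mul] at hnkr; omega
    · exact h0
  have hrpos : 0 < r := by
    rcases Nat.eq_zero_or_pos r with h0 | h0
    · rw [h0, mul_zero] at hnkr; omega
    · exact h0
  have hvdeg : e = r + v.natDegree := by
    rw [he_def, hhv, natDegree_mul (pow_ne_zero _ X_ne_zero) hvne, natDegree_X_pow]
  -- nonzero roots of f are simple
  have hsimple : ∀ z : ℂ, z ≠ 0 → ¬ ((X - C z) ^ 2 ∣ (X ^ m + X ^ n : ℂ[X])) := by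
    rintro z hz ⟨s, hs⟩
    have hevz : z ^ m + z ^ n = 0 := by
      have h1 := congrArg (eval z) hs
      simpa using h1
    have hdevz : (m : ℂ) * z ^ (m - 1) + (n : ℂ) * z ^ (n - 1) = 0 := by
      have h1 := congrArg (fun p => eval z (derivative p)) hs
      simp only [derivative_add, derivative_X_pow, derivative_mul, derivative_pow,
        eval_add, eval_mul, eval_pow, eval_sub, eval_X, eval_C, sub_self] at h1
      simpa using h1
    have hp0 : z ^ m = z ^ n * z ^ (m - n) := by
      rw [← pow_add]; congr 1; omega
    have hzq : z ^ (m - n) = -1 := by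
      have h3 : z ^ n * (z ^ (m - n) + 1) = 0 := by linear_combination hevz - hp0
      rcases mul_eq_zero.mp h3 with h4 | h4
      · exact absurd h4 (pow_ne_zero _ hz)
      · linear_combination h4
    have hp1 : z ^ (m - 1) = z ^ (n - 1) * z ^ (m - n) := by
      rw [← pow_add]; congr 1; omega
    have h5 : z ^ (n - 1) * ((m : ℂ) * z ^ (m - n) + n) = 0 := by
      linear_combination hdevz - (m : ℂ) * hp1
    rcases mul_eq_zero.mp h5 with h6 | h6
    · exact absurd h6 (pow_ne_zero _ hz)
    · rw [hzq] at h6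
      have h7 : (m : ℂ) = (n : ℂ) := by linear_combination -h6
      have h8 : m = n := by exact_mod_cast h7
      omega
  by_cases her : e = r
  · -- h = C c * X ^ e
    right
    have hvdeg0 : v.natDegree = 0 := by omega
    have hvC : v = C (v.coeff 0) := eq_C_of_natDegree_eq_zero hvdeg0
    have hhform : h = C (v.coeff 0) * X ^ e := by
      rw [hhv, ← her]
      conv_lhs => rw [hvC]
      exact mul_comm _ _
    have hedivn : e ∣ n := by
      by_contra hnd
      have hco1 : (X ^ m + X ^ n : ℂ[X]).coeff n = 1 := by
        rw [coeff_add, coeff_X_pow, coeff_X_pow, if_neg (by omega), if_pos rfl]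
        simp
      rw [hcomp, hhform] at hco1
      rw [xm_aux_comp_C_mul_X_pow_coeff' g (v.coeff 0) e n hnd] at hco1
      exact one_ne_zero hco1.symm
    have hedivm : e ∣ m := ⟨d, by rw [mul_comm]; exact hde.symm⟩
    have : e ∣ 1 := hgcd ▸ Nat.dvd_gcd hedivm hedivn
    exact Nat.dvd_one.mp this
  · have hrle : r ≤ e := by omega
    have hrlt : r < e := lt_of_le_of_ne hrle (Ne.symm her)
    have hk1 : k = 1 := by
      by_contra hk2
      have hk2' : 2 ≤ k := by omega
      have hvdegpos : v.degree ≠ 0 := by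
        rw [degree_eq_natDegree hvne]
        exact_mod_cast (by omega : v.natDegree ≠ 0)
      obtain ⟨z, hzroot⟩ := IsAlgClosed.exists_root v hvdegpos
      have hz0 : z ≠ 0 := fun h0 => hv0 (by rw [h0] at hzroot; exact hzroot)
      apply hsimple z hz0
      have hdvd1 : (X - C z) ∣ h := by
        rw [hhv]
        exact Dvd.dvd.mul_left (dvd_iff_isRoot.mpr hzroot) _
      have hdvd2 : (X - C z) ^ 2 ∣ h ^ k :=
        (pow_dvd_pow_of_dvd hdvd1 2).trans (pow_dvd_pow h hk2')
      have hdvd3 : h ^ k ∣ g.comp h := by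
        conv_rhs => rw [hgu, mul_comp, X_pow_comp]
        exact dvd_mul_right _ _
      rw [hcomp]
      exact hdvd2.trans hdvd3
    have hrn : r = n := by rw [hk1, one_mul] at hnkr; omega
    -- symmetry via primitive root of unity
    have hq1 : m - n ≠ 0 := hq0
    obtain ⟨ω, hω⟩ : ∃ ω : ℂ, IsPrimitiveRoot ω (m - n) :=
      ⟨_, Complex.isPrimitiveRoot_exp (m - n) hq1⟩
    have hω0 : ω ≠ 0 := hω.ne_zero (by omega)
    have hωq : ω ^ (m - n) = 1 := hω.pow_eq_one
    have hωm : ω ^ m = ω ^ n := by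
      rw [(by omega : m = n + (m - n)), pow_add, hωq, mul_one]
    have hgmonic : g.Monic := by
      have h1 : (g.comp h).leadingCoeff = g.leadingCoeff * h.leadingCoeff ^ d :=
        leadingCoeff_comp (by omega)
      rw [← hcomp, hfmonic.leadingCoeff, hh.leadingCoeff, one_pow, mul_one] at h1
      exact h1.symm
    set h2 : ℂ[X] := C ((ω ^ e)⁻¹) * h.comp (C ω * X) with hh2def
    set g2 : ℂ[X] := C ((ω ^ n)⁻¹) * g.comp (C (ω ^ e) * X) with hg2def
    have hωe0 : (ω : ℂ) ^ e ≠ 0 := pow_ne_zero _ hω0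
    have hωn0 : (ω : ℂ) ^ n ≠ 0 := pow_ne_zero _ hω0
    have hlcCX : (C ω * X : ℂ[X]).leadingCoeff = ω := by
      rw [leadingCoeff_mul, leadingCoeff_C, leadingCoeff_X, mul_one]
    have hlcCX2 : (C (ω ^ e) * X : ℂ[X]).leadingCoeff = ω ^ e := by
      rw [leadingCoeff_mul, leadingCoeff_C, leadingCoeff_X, mul_one]
    have hinner : (C (ω ^ e) * X).comp h2 = h.comp (C ω * X) := by
      rw [mul_comp, C_comp, X_comp, hh2def, ← mul_assoc, ← C_mul,
        mul_inv_cancel₀ hωe0, C_1, one_mul]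
    have hfcomp : (X ^ m + X ^ n : ℂ[X]).comp (C ω * X) =
        C (ω ^ n) * (X ^ m + X ^ n) := by
      rw [add_comp, X_pow_comp, X_pow_comp, mul_pow, mul_pow, ← C_pow, ← C_pow, hωm, mul_add]
    have hcomp2 : g2.comp h2 = g.comp h := by
      rw [hg2def, mul_comp, C_comp, comp_assoc, hinner, ← comp_assoc, ← hcomp, hfcomp,
        ← mul_assoc, ← C_mul, inv_mul_cancel₀ hωn0, C_1, one_mul, hcomp]
    have hcompCX_deg : (h.comp (C ω * X)).natDegree = e := by
      rw [natDegree_comp, natDegree_C_mul_X _ hω0, mul_one, he_def]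
    have hh2monic : h2.Monic := by
      rw [Monic, hh2def, leadingCoeff_mul, leadingCoeff_C,
        leadingCoeff_comp (by rw [natDegree_C_mul_X _ hω0]; exact one_ne_zero),
        hh.leadingCoeff, one_mul, hlcCX, ← he_def, inv_mul_cancel₀ hωe0]
    have hh2e : h2.natDegree = e := by
      rw [hh2def, natDegree_C_mul (inv_ne_zero hωe0), hcompCX_deg]
    have hh20 : h2.coeff 0 = 0 := by
      rw [hh2def, coeff_C_mul, xm_aux_comp_C_mul_X_coeff', pow_zero, one_mul, h00, mul_zero]
    have hg2monic : g2.Monic := by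
      rw [Monic, hg2def, leadingCoeff_mul, leadingCoeff_C,
        leadingCoeff_comp (by rw [natDegree_C_mul_X _ hωe0]; exact one_ne_zero),
        hgmonic.leadingCoeff, one_mul, hlcCX2, ← hd_def, ← pow_mul,
        (show e * d = m by rw [mul_comm]; exact hde), hωm, inv_mul_cancel₀ hωn0]
    have hg2d : g2.natDegree = d := by
      rw [hg2def, natDegree_C_mul (inv_ne_zero hωn0), natDegree_comp,
        natDegree_C_mul_X _ hωe0, mul_one, hd_def]
    have key : h = h2 :=
      xm_aux_uniq' hd1 hgmonic hg2monic hh hh2monic hd_def.symm hg2d he_def.symm hh2e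
        h00 hh20 hcomp2.symm
    have hcoeffn : h.coeff n ≠ 0 := by
      have h5 : h.coeff n = v.coeff 0 := by
        rw [hhv, hrn]
        simpa using coeff_X_pow_mul v n 0
      rw [h5, coeff_zero_eq_eval_zero]
      exact hv0
    have heqc := congrArg (fun p => Polynomial.coeff p n) key
    simp only [hh2def, coeff_C_mul, xm_aux_comp_C_mul_X_coeff'] at heqc
    have hωen : ω ^ e = ω ^ n := by
      have h6 : ω ^ e * h.coeff n = ω ^ n * h.coeff n := by
        field_simp at heqc
        linear_combination h.coeff n * heqc
      exact mul_right_cancel₀ hcoeffn h6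
    have hωen1 : ω ^ (e - n) = 1 := by
      have h6 : ω ^ n * ω ^ (e - n) = ω ^ n * 1 := by
        rw [mul_one, ← pow_add, (by omega : n + (e - n) = e), hωen]
      exact mul_left_cancel₀ hωn0 h6
    have hdvd := hω.dvd_of_pow_eq_one _ hωen1
    have hem : m ≤ e := by
      have : m - n ≤ e - n := Nat.le_of_dvd (by omega) hdvd
      omega
    left
    have h7 : d * e ≤ 1 * e := by rw [one_mul, hde]; exact hem
    have h8 : d ≤ 1 := Nat.le_of_mul_le_mul_right h7 he1
    omega


/-- **Indecomposability of `X^m + X^n`.**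
If `m > n > 0` and `gcd m n = 1`, then whenever `X^m + X^n = g ∘ h` for complex
polynomials `g, h`, one of `g`, `h` has degree 1. -/
theorem xm_add_xn_indecomposable (m n : ℕ) (hn : 0 < n) (hnm : n < m)
    (hgcd : Nat.gcd m n = 1) (g h : Polynomial ℂ)
    (hcomp : (X ^ m + X ^ n : Polynomial ℂ) = g.comp h) :
    g.degree = 1 ∨ h.degree = 1 := by
  have hfdeg : (X ^ m + X ^ n : ℂ[X]).natDegree = m := by
    have hdlt : (X ^ n : ℂ[X]).degree < (X ^ m : ℂ[X]).degree := by
      rw [degree_X_pow, degree_X_pow]; exact_mod_cast hnm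
    exact natDegree_eq_of_degree_eq_some
      (by rw [degree_add_eq_left_of_degree_lt hdlt, degree_X_pow])
  have hde : g.natDegree * h.natDegree = m := by
    rw [← natDegree_comp, ← hcomp, hfdeg]
  have hgne : g ≠ 0 := by
    rintro rfl
    rw [natDegree_zero, zero_mul] at hde
    omega
  have hhne : h ≠ 0 := by
    rintro rfl
    rw [natDegree_zero, mul_zero] at hde
    omega
  have hhdeg_pos : 0 < h.natDegree := by
    rcases Nat.eq_zero_or_pos h.natDegree with h0 | h0
    · rw [h0, mul_zero] at hde; omega
    · exact h0
  set c := h.leadingCoeff with hc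
  have hc0 : c ≠ 0 := leadingCoeff_ne_zero.mpr hhne
  set a := h.coeff 0 with ha
  set h1 : ℂ[X] := C c⁻¹ * (h - C a) with hh1
  set g1 : ℂ[X] := g.comp (C c * X + C a) with hg1
  have hsub : (h - C a).natDegree = h.natDegree := natDegree_sub_C
  have hh1monic : h1.Monic := by
    rw [Monic, hh1, leadingCoeff_mul, leadingCoeff_C]
    have hl : (h - C a).leadingCoeff = c := by
      rw [leadingCoeff, hsub, coeff_sub, coeff_C, if_neg (by omega), sub_zero, hc, leadingCoeff]
    rw [hl, inv_mul_cancel₀ hc0]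
  have hh10 : h1.coeff 0 = 0 := by
    rw [hh1, coeff_C_mul, coeff_sub, coeff_C, if_pos rfl, ← ha, sub_self, mul_zero]
  have hh1deg : h1.natDegree = h.natDegree := by
    rw [hh1, natDegree_C_mul (inv_ne_zero hc0), hsub]
  have hg1deg : g1.natDegree = g.natDegree := by
    rw [hg1, natDegree_comp, natDegree_linear hc0, mul_one]
  have hcomp1 : (X ^ m + X ^ n : ℂ[X]) = g1.comp h1 := by
    rw [hg1, comp_assoc, hcomp]
    congr 1
    rw [add_comp, mul_comp, C_comp, C_comp, X_comp, hh1, ← mul_assoc, ← C_mul,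
      mul_inv_cancel₀ hc0, C_1, one_mul, sub_add_cancel]
  rcases xm_aux_main m n hn hnm hgcd g1 h1 hh1monic hh10 hcomp1 with h1' | h1'
  · left
    rw [degree_eq_natDegree hgne, ← hg1deg, h1', Nat.cast_one]
  · right
    rw [degree_eq_natDegree hhne, ← hh1deg, h1', Nat.cast_one]
end

section
/- Let γ ∈ ℤ^l be a vector of nonzero integers summing to zero with gcd of entries equal to 1, and let A be an integer matrix as above (first row all ones, first l−1 rows spanning ker(γ : ℤ^l → ℤ), last row k with γ·k = 1) with column blocks (1, m_j, k_j) for j = 1,…,l where m_j ∈ ℤ^{l-2}. Then for every h ∈ {1,…,l}, the l−1 vectors (m_j − m_h, k_j − k_h) ∈ ℤ^{l-1} for j ≠ h span ℤ^{l-1}. -/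
open Finset

/-- **Change of variables lemma.**
Let `γ ∈ ℤ^l` (`l = d + 2`) be a prime gamma vector and `A` an `l × l` integer
matrix whose first row is all ones, whose first `l − 1` rows span
`ker (γ : ℤ^l → ℤ)`, and whose last row `k` satisfies `γ · k = 1`; write the
columns of `A` as `(1, m_j, k_j)` with `m_j ∈ ℤ^d`.  Then for every
`h ∈ {1, …, l}` the `l − 1` vectors `(m_j − m_h, k_j − k_h) ∈ ℤ^{l-1}`, `j ≠ h`,
span `ℤ^{l-1}`. -/
theorem toric_model_differences_span (d : ℕ) (γ : Fin (d + 2) → ℤ)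
    (hγ0 : ∀ j, γ j ≠ 0) (hsum : ∑ j, γ j = 0)
    (hgcd : Finset.univ.gcd γ = 1)
    (A : Matrix (Fin (d + 2)) (Fin (d + 2)) ℤ)
    (hrow0 : ∀ j, A 0 j = 1)
    (hker : Submodule.span ℤ {v : Fin (d + 2) → ℤ | ∃ i : Fin (d + 2), (i : ℕ) < d + 1 ∧ v = A i}
      = LinearMap.ker (Fintype.linearCombination ℤ γ))
    (hlast : ∑ j, γ j * A ⟨d + 1, by omega⟩ j = 1)
    (h : Fin (d + 2)) :
    Submodule.span ℤ
      {v : Fin (d + 1) → ℤ | ∃ j : Fin (d + 2), j ≠ h ∧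
        v = fun i : Fin (d + 1) =>
          if hi : (i : ℕ) < d then
            A ⟨(i : ℕ) + 1, by omega⟩ j - A ⟨(i : ℕ) + 1, by omega⟩ h
          else
            A ⟨d + 1, by omega⟩ j - A ⟨d + 1, by omega⟩ h} = ⊤ := by
  set k : Fin (d + 2) → ℤ := A ⟨d + 1, by omega⟩ with hkdef
  -- Step 1: the rows of A span ℤ^{d+2}
  have hrows : Submodule.span ℤ (Set.range A) = ⊤ := by
    rw [eq_top_iff]
    rintro v -
    set c : ℤ := ∑ j, γ j * v j with hc
    have hmem : v - c • k ∈ LinearMap.ker (Fintype.linearCombination ℤ γ) := by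
      simp only [LinearMap.mem_ker, Fintype.linearCombination_apply, Pi.sub_apply,
        Pi.smul_apply, smul_eq_mul, sub_mul, Finset.sum_sub_distrib]
      have h1 : ∑ i, v i * γ i = c := by rw [hc]; exact Finset.sum_congr rfl fun i _ => mul_comm _ _
      have h2 : ∑ i, c * k i * γ i = c := by
        simp only [mul_assoc]
        rw [← Finset.mul_sum]
        have : ∑ i, k i * γ i = 1 := by
          rw [← hlast]; exact Finset.sum_congr rfl fun i _ => mul_comm _ _
        rw [this, mul_one]
      rw [h1, h2, sub_self]
    rw [← hker] at hmem
    have hsub : Submodule.span ℤ {v : Fin (d + 2) → ℤ | ∃ i : Fin (d + 2), (i : ℕ) < d + 1 ∧ v = A i}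
        ≤ Submodule.span ℤ (Set.range A) := by
      apply Submodule.span_mono
      rintro w ⟨i, -, rfl⟩; exact ⟨i, rfl⟩
    have hk : k ∈ Submodule.span ℤ (Set.range A) := Submodule.subset_span ⟨_, rfl⟩
    have := Submodule.add_mem _ (hsub hmem) (Submodule.smul_mem _ c hk)
    simpa using this
  -- Step 2: A is a unit, so mulVec is surjective
  have hunit : IsUnit A := by
    rw [← Matrix.vecMul_surjective_iff_isUnit]
    intro u
    have : u ∈ LinearMap.range A.vecMulLinear := by
      rw [range_vecMulLinear]; change u ∈ Submodule.span ℤ (Set.range A); rw [hrows]; trivial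
    obtain ⟨cc, hcc⟩ := this
    exact ⟨cc, by simpa using hcc⟩
  have hmv : Function.Surjective A.mulVec := Matrix.mulVec_surjective_iff_isUnit.2 hunit
  -- Step 3
  rw [eq_top_iff]
  rintro v -
  obtain ⟨c, hc⟩ := hmv (Fin.cons 0 v)
  have hc0 : ∑ j, c j = 0 := by
    have h0 := congrFun hc 0
    simp only [Matrix.mulVec, dotProduct, hrow0, one_mul, Fin.cons_zero] at h0
    exact h0
  have hcs : ∀ i : Fin (d + 1), ∑ j, A i.succ j * c j = v i := by
    intro i
    have hi := congrFun hc i.succ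
    simpa [Matrix.mulVec, dotProduct] using hi
  set w : Fin (d + 2) → (Fin (d + 1) → ℤ) := fun j => fun i : Fin (d + 1) =>
          if hi : (i : ℕ) < d then
            A ⟨(i : ℕ) + 1, by omega⟩ j - A ⟨(i : ℕ) + 1, by omega⟩ h
          else
            A ⟨d + 1, by omega⟩ j - A ⟨d + 1, by omega⟩ h with hwdef
  have hw : ∀ j i, w j i = A i.succ j - A i.succ h := by
    intro j i
    simp only [hwdef]
    by_cases hi : (i : ℕ) < d
    · rw [dif_pos hi, show (⟨(i : ℕ) + 1, by omega⟩ : Fin (d + 2)) = i.succ from Fin.ext rfl]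
    · have hieq : (i : ℕ) = d := by omega
      have h2 : (⟨d + 1, by omega⟩ : Fin (d + 2)) = i.succ := by
        ext; simp [Fin.val_succ, hieq]
      rw [dif_neg hi, h2]
  have key : v = ∑ j ∈ Finset.univ.erase h, c j • w j := by
    funext i
    have : (∑ j ∈ Finset.univ.erase h, c j • w j) i
        = ∑ j ∈ Finset.univ.erase h, c j * (A i.succ j - A i.succ h) := by
      rw [Finset.sum_apply]
      exact Finset.sum_congr rfl fun j _ => by rw [Pi.smul_apply, smul_eq_mul, hw]
    rw [this, Finset.sum_erase (f := fun j => c j * (A i.succ j - A i.succ h)) _ (by ring)]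
    have : ∑ j, c j * (A i.succ j - A i.succ h)
        = (∑ j, A i.succ j * c j) - (∑ j, c j) * A i.succ h := by
      simp only [mul_sub]
      rw [Finset.sum_sub_distrib, ← Finset.sum_mul]
      congr 1
      exact Finset.sum_congr rfl fun j _ => mul_comm _ _
    rw [this, hcs, hc0, zero_mul, sub_zero]
  rw [key]
  exact Submodule.sum_mem _ fun j hj => Submodule.smul_mem _ _
    (Submodule.subset_span ⟨j, (Finset.mem_erase.mp hj).1, rfl⟩)
end

section
/- Let γ ∈ ℤ^l be a prime gamma vector whose associated vectors m_1, …, m_l ∈ ℤ^d (d = l−2) satisfy ∑ γ_j m_j = 0 and: for each fixed k, the vectors m_j − m_k span ℤ^d. Let Δ ⊂ ℝ^d be the convex hull of the m_j. If F is a facet of Δ, then F contains at most d of the points m_j; in particular every proper face of Δ is a simplex. -/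
open Finset

/-- **Facets of `Δ` contain at most `d` of the points `m_j`; `Δ` is simplicial.**
Let `γ ∈ ℤ^l` (`l = d + 2`) be a prime gamma vector with associated points
`m_1, …, m_l ∈ ℤ^d` satisfying `∑ γ_j m_j = 0` and such that for each `k` the
differences `m_j − m_k` span `ℤ^d`.  If `u` is a (integral) linear functional
and `b` a bound with `⟨m_j, u⟩ ≤ b` for all `j` and `⟨m_j, u⟩ < b` for some `j`
(so that `{x ∈ Δ : ⟨x, u⟩ = b}` is a proper face, in particular any facet arises
this way), then at most `d` of the points `m_j` lie on the face. -/
theorem facet_contains_at_most_d_points (d : ℕ) (γ : Fin (d + 2) → ℤ)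
    (hγ0 : ∀ j, γ j ≠ 0) (hsum : ∑ j, γ j = 0)
    (hgcd : Finset.univ.gcd γ = 1)
    (m : Fin (d + 2) → Fin d → ℤ)
    (hrelm : ∀ i, ∑ j, γ j * m j i = 0)
    (hspan : ∀ k : Fin (d + 2),
      Submodule.span ℤ {v : Fin d → ℤ | ∃ j, v = m j - m k} = ⊤)
    (u : Fin d → ℤ) (b : ℤ)
    (hsupp : ∀ j, ∑ i, m j i * u i ≤ b)
    (hproper : ∃ j, ∑ i, m j i * u i < b) :
    (Finset.univ.filter (fun j => ∑ i, m j i * u i = b)).card ≤ d := by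
  set f : Fin (d + 2) → ℤ := fun j => ∑ i, m j i * u i - b with hf
  set S : Finset (Fin (d + 2)) :=
    Finset.univ.filter (fun j => ∑ i, m j i * u i = b) with hS
  by_contra h
  push_neg at h
  -- total sum ∑ γ j * f j = 0
  have htot : ∑ j, γ j * f j = 0 := by
    have : ∑ j, γ j * f j
        = (∑ i, (∑ j, γ j * m j i) * u i) - (∑ j, γ j) * b := by
      simp only [hf, mul_sub, Finset.sum_sub_distrib, Finset.mul_sum,
        Finset.sum_mul]
      rw [Finset.sum_comm]
      ring_nf
      congr 1
      exact Finset.sum_congr rfl fun _ _ => mul_comm _ _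
    simp [this, hsum, hrelm]
  -- complement of S has card ≤ 1
  have hcardc : Sᶜ.card ≤ 1 := by
    have hc := Finset.card_compl S
    rw [Fintype.card_fin] at hc
    omega
  obtain ⟨k, hk⟩ := hproper
  have hkS : k ∈ Sᶜ := by
    simp [hS, hk.ne]
  have hSc : Sᶜ = {k} :=
    Finset.eq_singleton_iff_unique_mem.mpr
      ⟨hkS, fun x hx => by
        by_contra hxk
        have : 2 ≤ Sᶜ.card := Finset.one_lt_card.mpr ⟨x, hx, k, hkS, hxk⟩
        omega⟩
  have hzero : ∀ j ∈ S, γ j * f j = 0 := by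
    intro j hj
    simp only [hS, Finset.mem_filter] at hj
    simp [hf, hj.2]
  have : ∑ j ∈ Sᶜ, γ j * f j = 0 := by
    have := Finset.sum_compl_add_sum S (fun j => γ j * f j)
    rw [Finset.sum_eq_zero hzero, add_zero] at this
    omega
  rw [hSc, Finset.sum_singleton] at this
  have hfk : f k < 0 := by simp [hf]; omega
  have := mul_ne_zero (hγ0 k) hfk.ne
  contradiction
end

section
/- With notation as above (γ a prime gamma vector, m_j ∈ ℤ^d its associated exponent vectors, Δ their convex hull), Δ is a simplex if and only if either γ or −γ has exactly one negative entry; and if γ_k is the unique negative (resp. unique positive) entry of γ, then m_k lies in the interior of Δ. -/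
open Finset


noncomputable def castMap (d : ℕ) : (Fin d → ℤ) →ₗ[ℤ] (Fin d → ℝ) where
  toFun v := fun i => (v i : ℝ)
  map_add' u v := by funext i; simp
  map_smul' c v := by funext i; simp [zsmul_eq_mul]

lemma span_real (d : ℕ) (m : Fin (d + 2) → Fin d → ℤ) (k : Fin (d + 2))
    (hspan : Submodule.span ℤ {v : Fin d → ℤ | ∃ j, v = m j - m k} = ⊤)
    (mR : Fin (d + 2) → Fin d → ℝ) (hmR : ∀ j i, mR j i = (m j i : ℝ)) :
    Submodule.span ℝ {v : Fin d → ℝ | ∃ j, v = mR j - mR k} = ⊤ := by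
  have hf : ∀ v : Fin d → ℤ, castMap d v ∈
      Submodule.span ℝ {v : Fin d → ℝ | ∃ j, v = mR j - mR k} := by
    intro v
    have hv : v ∈ Submodule.span ℤ {v : Fin d → ℤ | ∃ j, v = m j - m k} := by
      rw [hspan]; trivial
    have h1 : castMap d v ∈ Submodule.map (castMap d)
        (Submodule.span ℤ {v : Fin d → ℤ | ∃ j, v = m j - m k}) :=
      Submodule.mem_map_of_mem hv
    rw [Submodule.map_span] at h1
    have h2 : castMap d '' {v : Fin d → ℤ | ∃ j, v = m j - m k} ⊆
        {v : Fin d → ℝ | ∃ j, v = mR j - mR k} := by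
      rintro x ⟨y, ⟨j, rfl⟩, rfl⟩
      exact ⟨j, by funext i; simp [castMap, hmR]⟩
    have h3 := Submodule.span_mono (R := ℤ) h2 h1
    have h4 : Submodule.span ℤ {v : Fin d → ℝ | ∃ j, v = mR j - mR k} ≤
        Submodule.restrictScalars ℤ
          (Submodule.span ℝ {v : Fin d → ℝ | ∃ j, v = mR j - mR k}) := by
      rw [Submodule.span_le]
      exact Submodule.subset_span
    exact h4 h3
  rw [eq_top_iff, ← (Pi.basisFun ℝ (Fin d)).span_eq, Submodule.span_le]
  rintro x ⟨i, rfl⟩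
  have : (Pi.basisFun ℝ (Fin d)) i = castMap d (Pi.single i 1) := by
    funext j
    simp [castMap, Pi.basisFun_apply, Pi.single_apply]
  rw [this]
  exact hf _

open Finset

noncomputable def Tmap (d : ℕ) (mR : Fin (d + 2) → Fin d → ℝ) :
    (Fin (d + 2) → ℝ) →ₗ[ℝ] ℝ × (Fin d → ℝ) where
  toFun w := (∑ j, w j, ∑ j, w j • mR j)
  map_add' u v := by
    simp [Finset.sum_add_distrib, add_smul, Prod.ext_iff]
  map_smul' c v := by
    simp [Finset.mul_sum, Prod.ext_iff, smul_smul, Finset.smul_sum]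

lemma relation_unique (d : ℕ) (γ : Fin (d + 2) → ℤ)
    (hγ0 : ∀ j, γ j ≠ 0) (hsum : ∑ j, γ j = 0)
    (mR : Fin (d + 2) → Fin d → ℝ)
    (hrel : ∀ i, ∑ j, (γ j : ℝ) * mR j i = 0)
    (hspanR : Submodule.span ℝ {v : Fin d → ℝ | ∃ j, v = mR j - mR 0} = ⊤)
    (w : Fin (d + 2) → ℝ) (hw : ∑ j, w j = 0)
    (hwm : ∀ i, ∑ j, w j * mR j i = 0) :
    ∃ c : ℝ, ∀ j, w j = c * (γ j : ℝ) := by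
  set T := Tmap d mR with hT
  -- surjectivity
  have hsurj : LinearMap.range T = ⊤ := by
    rw [eq_top_iff]
    rintro ⟨a, v⟩ -
    -- (0, x) is in range for all x
    have h0 : ∀ x : Fin d → ℝ, (0, x) ∈ LinearMap.range T := by
      have hsub : {v : Fin d → ℝ | ∃ j, v = mR j - mR 0} ⊆
          {x : Fin d → ℝ | ((0 : ℝ), x) ∈ LinearMap.range T} := by
        rintro x ⟨j, rfl⟩
        refine ⟨Pi.single j 1 - Pi.single 0 1, ?_⟩
        have hs : ∀ (u : Fin (d + 2)), (∑ j', (Pi.single u 1 : Fin (d+2) → ℝ) j') = 1 := by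
          intro u; simp [Pi.single_apply]
        have hs2 : ∀ (u : Fin (d + 2)),
            (∑ j', (Pi.single u 1 : Fin (d+2) → ℝ) j' • mR j') = mR u := by
          intro u
          rw [Finset.sum_eq_single u] <;> simp +contextual [Pi.single_apply]
        simp only [hT, Tmap, LinearMap.coe_mk, AddHom.coe_mk, Prod.ext_iff]
        constructor
        · simp only [Pi.sub_apply, Finset.sum_sub_distrib, hs, sub_self]
        · simp only [Pi.sub_apply, sub_smul, Finset.sum_sub_distrib, hs2]
      have : Submodule.span ℝ {v : Fin d → ℝ | ∃ j, v = mR j - mR 0} ≤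
          Submodule.comap (LinearMap.inr ℝ ℝ (Fin d → ℝ)) (LinearMap.range T) := by
        rw [Submodule.span_le]
        exact hsub
      rw [hspanR] at this
      intro x
      exact this (Submodule.mem_top (x := x))
    -- (1, mR 0) in range
    have h1 : ((1 : ℝ), mR 0) ∈ LinearMap.range T := by
      refine ⟨Pi.single 0 1, ?_⟩
      simp only [hT, Tmap, LinearMap.coe_mk, AddHom.coe_mk, Prod.ext_iff]
      constructor
      · simp [Pi.single_apply]
      · rw [Finset.sum_eq_single 0] <;> simp +contextual [Pi.single_apply]
    have : (a, v) = a • ((1 : ℝ), mR 0) + (0, v - a • mR 0) := by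
      simp [Prod.ext_iff]
    rw [this]
    exact Submodule.add_mem _ (Submodule.smul_mem _ _ h1) (h0 _)
  -- rank-nullity
  have hker : Module.finrank ℝ (LinearMap.ker T) = 1 := by
    have h := LinearMap.finrank_range_add_finrank_ker T
    rw [hsurj] at h
    rw [finrank_top] at h
    simp only [Module.finrank_prod, Module.finrank_self, Module.finrank_pi,
      Fintype.card_fin] at h
    omega
  -- γ is in the kernel
  set γR : Fin (d + 2) → ℝ := fun j => (γ j : ℝ) with hγR
  have hγmem : γR ∈ LinearMap.ker T := by
    rw [LinearMap.mem_ker]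
    simp only [hT, Tmap, LinearMap.coe_mk, AddHom.coe_mk, Prod.ext_iff]
    constructor
    · have : ((∑ j, γ j : ℤ) : ℝ) = 0 := by rw [hsum]; simp
      push_cast at this
      exact this
    · funext i
      have := hrel i
      simpa [Finset.sum_apply] using this
  have hγne : γR ≠ 0 := by
    intro h
    apply hγ0 0
    have := congrFun h 0
    simpa [hγR] using this
  have hle : Submodule.span ℝ {γR} ≤ LinearMap.ker T := by
    rw [Submodule.span_le, Set.singleton_subset_iff]; exact hγmem
  have heq : Submodule.span ℝ {γR} = LinearMap.ker T := by
    apply Submodule.eq_of_le_of_finrank_le hle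
    rw [hker, finrank_span_singleton hγne]
  have hwmem : w ∈ LinearMap.ker T := by
    rw [LinearMap.mem_ker]
    simp only [hT, Tmap, LinearMap.coe_mk, AddHom.coe_mk, Prod.ext_iff]
    refine ⟨hw, ?_⟩
    funext i
    simpa [Finset.sum_apply] using hwm i
  rw [← heq, Submodule.mem_span_singleton] at hwmem
  obtain ⟨c, hc⟩ := hwmem
  exact ⟨c, fun j => by rw [← hc]; simp [hγR]⟩

open Finset

lemma affind (d : ℕ) (γ : Fin (d + 2) → ℤ)
    (hγ0 : ∀ j, γ j ≠ 0)
    (mR : Fin (d + 2) → Fin d → ℝ)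
    (huniq : ∀ w : Fin (d + 2) → ℝ, ∑ j, w j = 0 → (∀ i, ∑ j, w j * mR j i = 0) →
      ∃ c : ℝ, ∀ j, w j = c * (γ j : ℝ))
    (k : Fin (d + 2)) :
    AffineIndependent ℝ (fun i : (univ.erase k : Finset (Fin (d + 2))) => mR i) := by
  rw [affineIndependent_iff]
  intro t w hw0 hwsum e het
  classical
  set W : Fin (d + 2) → ℝ := fun j =>
    if h : j ∈ univ.erase k then (if ⟨j, h⟩ ∈ t then w ⟨j, h⟩ else 0) else 0 with hW
  have hWval : ∀ x : (univ.erase k : Finset (Fin (d + 2))),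
      W x.val = if x ∈ t then w x else 0 := by
    intro x
    simp only [hW, x.2, dif_pos, Subtype.coe_eta]
  have hWk : W k = 0 := by simp [hW]
  have hsum1 : ∀ f : Fin (d + 2) → (Fin d → ℝ), (∀ j, j ∉ univ.erase k → W j • f j = 0) →
      True := fun _ _ => trivial
  -- sum of W
  have hsumW : ∑ j, W j = 0 := by
    rw [← Finset.sum_subset (Finset.subset_univ (univ.erase k))
      (fun j _ hj => by simp only [hW]; exact dif_neg hj)]
    rw [← Finset.sum_attach (univ.erase k) W]
    calc ∑ x ∈ (univ.erase k).attach, W x.val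
        = ∑ x ∈ (univ.erase k).attach, (if x ∈ t then w x else 0) := by
          exact Finset.sum_congr rfl fun x _ => hWval x
      _ = ∑ x ∈ t, w x := by
          rw [Finset.sum_ite_mem,
            Finset.inter_eq_right.2 (fun x _ => Finset.mem_attach _ x)]
      _ = 0 := hw0
  have hsumWm : ∑ j, W j • mR j = 0 := by
    rw [← Finset.sum_subset (Finset.subset_univ (univ.erase k))
      (fun j _ hj => by simp only [hW]; rw [dif_neg hj, zero_smul])]
    rw [← Finset.sum_attach (univ.erase k) (fun j => W j • mR j)]
    calc ∑ x ∈ (univ.erase k).attach, W x.val • mR x.val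
        = ∑ x ∈ (univ.erase k).attach, (if x ∈ t then w x • mR x.val else 0) := by
          refine Finset.sum_congr rfl fun x _ => ?_
          rw [hWval x]
          split <;> simp
      _ = ∑ x ∈ t, w x • mR x.val := by
          rw [Finset.sum_ite_mem,
            Finset.inter_eq_right.2 (fun x _ => Finset.mem_attach _ x)]
      _ = 0 := hwsum
  obtain ⟨c, hc⟩ := huniq W hsumW (fun i => by
    have := congrFun hsumWm i
    simpa [Finset.sum_apply] using this)
  have hc0 : c = 0 := by
    have := hc k
    rw [hWk] at this
    rcases mul_eq_zero.1 this.symm with h | h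
    · exact h
    · exact absurd (by exact_mod_cast h) (hγ0 k)
  have : W e.val = w e := by rw [hWval e, if_pos het]
  rw [← this, hc e.val, hc0, zero_mul]

open Finset

lemma core (d : ℕ) (mR : Fin (d + 2) → Fin d → ℝ) (k : Fin (d + 2))
    (hind : AffineIndependent ℝ (fun i : (univ.erase k : Finset (Fin (d + 2))) => mR i))
    (hspanRk : Submodule.span ℝ {v : Fin d → ℝ | ∃ j, v = mR j - mR k} = ⊤)
    (lam : Fin (d + 2) → ℝ)
    (hpos : ∀ j, j ≠ k → 0 < lam j)
    (hl1 : ∑ j ∈ univ.erase k, lam j = 1)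
    (hcomb : mR k = ∑ j ∈ univ.erase k, lam j • mR j) :
    (univ.erase k).card = d + 1 ∧
    convexHull ℝ (mR '' ↑(univ.erase k)) = convexHull ℝ (Set.range mR) ∧
    mR k ∈ interior (convexHull ℝ (Set.range mR)) := by
  classical
  have hcard : (univ.erase k).card = d + 1 := by
    rw [Finset.card_erase_of_mem (Finset.mem_univ k), Finset.card_univ, Fintype.card_fin]
    omega
  -- mR k is in the convex hull of the other points
  have hmem : mR k ∈ convexHull ℝ (mR '' ↑(univ.erase k)) := by
    have := Finset.centerMass_mem_convexHull (univ.erase k) (w := lam) (z := mR)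
      (fun i hi => (hpos i (Finset.mem_erase.1 hi).1).le)
      (by rw [hl1]; exact zero_lt_one)
      (fun i hi => Set.mem_image_of_mem mR (by exact_mod_cast hi))
    rwa [Finset.centerMass_eq_of_sum_1 _ _ hl1, ← hcomb] at this
  -- hull equality
  have hhull : convexHull ℝ (mR '' ↑(univ.erase k)) = convexHull ℝ (Set.range mR) := by
    refine Set.Subset.antisymm (convexHull_mono ?_) (convexHull_min ?_ (convex_convexHull _ _))
    · rintro x ⟨j, -, rfl⟩
      exact Set.mem_range_self j
    · rintro x ⟨j, rfl⟩
      by_cases hj : j = k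
      · rw [hj]; exact hmem
      · exact subset_convexHull _ _ (Set.mem_image_of_mem mR (by simp [hj]))
  -- full affine span
  have hspanall : affineSpan ℝ (Set.range mR) = ⊤ := by
    rw [AffineSubspace.affineSpan_eq_top_iff_vectorSpan_eq_top_of_nonempty ℝ (Fin d → ℝ) (Fin d → ℝ)
      (Set.range_nonempty mR)]
    rw [eq_top_iff, ← hspanRk, Submodule.span_le]
    rintro x ⟨j, rfl⟩
    exact vsub_mem_vectorSpan ℝ (Set.mem_range_self j) (Set.mem_range_self k)
  have htop : affineSpan ℝ (mR '' ↑(univ.erase k)) = ⊤ := by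
    rw [eq_top_iff, ← hspanall, affineSpan_le]
    rintro x ⟨j, rfl⟩
    by_cases hj : j = k
    · rw [hj]
      exact convexHull_subset_affineSpan _ hmem
    · exact subset_affineSpan ℝ _ (Set.mem_image_of_mem mR (by simp [hj]))
  -- affine basis
  have hrange : Set.range (fun i : (univ.erase k : Finset (Fin (d + 2))) => mR i)
      = mR '' ↑(univ.erase k) := by
    rw [show (fun i : (univ.erase k : Finset (Fin (d + 2))) => mR i) = mR ∘ Subtype.val from rfl,
      Set.range_comp, Subtype.range_coe_subtype]
    rfl
  let b : AffineBasis (univ.erase k : Finset (Fin (d + 2))) ℝ (Fin d → ℝ) :=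
    ⟨fun i => mR i, hind, by rw [hrange]; exact htop⟩
  have hbcoe : ∀ i, b i = mR i := fun i => rfl
  -- coordinates of mR k
  have hw'1 : ∑ i : (univ.erase k : Finset (Fin (d + 2))), lam i = 1 := by
    rw [Finset.univ_eq_attach, Finset.sum_attach (univ.erase k) lam]; exact hl1
  have hcombo : (Finset.univ.affineCombination ℝ b (fun i => lam i.val)) = mR k := by
    rw [Finset.affineCombination_eq_linear_combination _ _ _ hw'1]
    rw [hcomb, Finset.univ_eq_attach]
    exact Finset.sum_attach (univ.erase k) (fun j => lam j • mR j)
  have hint : mR k ∈ interior (convexHull ℝ (Set.range ⇑b)) := by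
    rw [b.interior_convexHull]
    intro i
    rw [← hcombo, b.coord_apply_combination_of_mem (Finset.mem_univ i) hw'1]
    exact hpos i.val (Finset.mem_erase.1 i.2).1
  have : Set.range ⇑b = mR '' ↑(univ.erase k) := hrange
  rw [this, hhull] at hint
  exact ⟨hcard, hhull, hint⟩


/-- **`Δ` is a simplex iff `±γ` has a unique negative entry, and the
corresponding point is interior.**
Let `γ ∈ ℤ^l` (`l = d + 2`) be a prime gamma vector with associated points
`m_1, …, m_l ∈ ℤ^d` satisfying `∑ γ_j m_j = 0`, whose pairwise differences
from any fixed `m_k` span `ℤ^d`, and let `Δ ⊂ ℝ^d` be their convex hull.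
Then `Δ` is a simplex iff `γ` or `−γ` has exactly one negative entry, and if
`γ_k` is the unique negative (resp. unique positive) entry then `m_k` lies in
the interior of `Δ`. -/
theorem simplex_iff_one_negative_entry (d : ℕ) (γ : Fin (d + 2) → ℤ)
    (hγ0 : ∀ j, γ j ≠ 0) (hsum : ∑ j, γ j = 0)
    (hgcd : Finset.univ.gcd γ = 1)
    (m : Fin (d + 2) → Fin d → ℤ)
    (hrelm : ∀ i, ∑ j, γ j * m j i = 0)
    (hspan : ∀ k : Fin (d + 2),
      Submodule.span ℤ {v : Fin d → ℤ | ∃ j, v = m j - m k} = ⊤)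
    (mR : Fin (d + 2) → Fin d → ℝ)
    (hmR : ∀ j i, mR j i = (m j i : ℝ)) :
    ((∃ s : Finset (Fin (d + 2)), s.card = d + 1 ∧
        AffineIndependent ℝ (fun i : s => mR i) ∧
        convexHull ℝ (mR '' ↑s) = convexHull ℝ (Set.range mR)) ↔
      ((Finset.univ.filter fun j => γ j < 0).card = 1 ∨
        (Finset.univ.filter fun j => 0 < γ j).card = 1)) ∧
    (∀ k : Fin (d + 2),
      ((Finset.univ.filter fun j => γ j < 0) = {k} ∨
        (Finset.univ.filter fun j => 0 < γ j) = {k}) →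
      mR k ∈ interior (convexHull ℝ (Set.range mR))) := by
  classical
  have hspanR : ∀ k, Submodule.span ℝ {v : Fin d → ℝ | ∃ j, v = mR j - mR k} = ⊤ :=
    fun k => span_real d m k (hspan k) mR hmR
  have hrelR0 : ∀ i, ∑ j, (γ j : ℝ) * mR j i = 0 := by
    intro i
    have h1 : ((∑ j, γ j * m j i : ℤ) : ℝ) = 0 := by rw [hrelm i]; simp
    push_cast at h1
    have h2 : ∀ j, (γ j : ℝ) * mR j i = (γ j : ℝ) * (m j i : ℝ) := by
      intro j; rw [hmR]
    rw [Finset.sum_congr rfl fun j _ => h2 j]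
    exact h1
  have huniq : ∀ w : Fin (d + 2) → ℝ, ∑ j, w j = 0 → (∀ i, ∑ j, w j * mR j i = 0) →
      ∃ c : ℝ, ∀ j, w j = c * (γ j : ℝ) :=
    relation_unique d γ hγ0 hsum mR hrelR0 (hspanR 0)
  have hind : ∀ k, AffineIndependent ℝ
      (fun i : (univ.erase k : Finset (Fin (d + 2))) => mR i) :=
    fun k => affind d γ hγ0 mR huniq k
  have hcore : ∀ k : Fin (d + 2), ∀ lam : Fin (d + 2) → ℝ,
      (∀ j, j ≠ k → 0 < lam j) → (∑ j ∈ univ.erase k, lam j = 1) →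
      (mR k = ∑ j ∈ univ.erase k, lam j • mR j) →
      (univ.erase k).card = d + 1 ∧
      convexHull ℝ (mR '' ↑(univ.erase k)) = convexHull ℝ (Set.range mR) ∧
      mR k ∈ interior (convexHull ℝ (Set.range mR)) :=
    fun k lam h1 h2 h3 => core d mR k (hind k) (hspanR k) lam h1 h2 h3
  classical
  have hrelR : ∀ i, ∑ j, (γ j : ℝ) * mR j i = 0 := by
    intro i
    have h1 : ((∑ j, γ j * m j i : ℤ) : ℝ) = 0 := by rw [hrelm i]; simp
    push_cast at h1
    have h2 : ∀ j, (γ j : ℝ) * mR j i = (γ j : ℝ) * (m j i : ℝ) := by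
      intro j; rw [hmR]
    rw [Finset.sum_congr rfl fun j _ => h2 j]
    exact h1
  -- key lemma
  have hkey : ∀ k : Fin (d + 2),
      ((Finset.univ.filter fun j => γ j < 0) = {k} ∨
        (Finset.univ.filter fun j => 0 < γ j) = {k}) →
      (univ.erase k).card = d + 1 ∧
      convexHull ℝ (mR '' ↑(univ.erase k)) = convexHull ℝ (Set.range mR) ∧
      mR k ∈ interior (convexHull ℝ (Set.range mR)) := by
    intro k hk
    have hγk0 : (γ k : ℝ) ≠ 0 := by exact_mod_cast hγ0 k
    set lam : Fin (d + 2) → ℝ := fun j => (γ j : ℝ) / (-(γ k : ℝ)) with hlam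
    have hsign : ∀ j, j ≠ k → 0 < lam j := by
      intro j hj
      rw [hlam]
      rcases hk with hk | hk
      · have hk1 : γ k < 0 := by
          have : k ∈ Finset.univ.filter fun j => γ j < 0 := by
            rw [hk]; exact Finset.mem_singleton_self k
          simpa using this
        have hj1 : 0 < γ j := by
          have : j ∉ Finset.univ.filter fun j' => γ j' < 0 := by
            rw [hk]; simp [hj]
          simp only [Finset.mem_filter, Finset.mem_univ, true_and, not_lt] at this
          exact lt_of_le_of_ne this (Ne.symm (hγ0 j))
        apply div_pos
        · exact_mod_cast hj1
        · simp only [Left.nonneg_neg_iff, neg_pos]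
          exact_mod_cast hk1
      · have hk1 : 0 < γ k := by
          have : k ∈ Finset.univ.filter fun j => 0 < γ j := by
            rw [hk]; exact Finset.mem_singleton_self k
          simpa using this
        have hj1 : γ j < 0 := by
          have : j ∉ Finset.univ.filter fun j' => 0 < γ j' := by
            rw [hk]; simp [hj]
          simp only [Finset.mem_filter, Finset.mem_univ, true_and, not_lt] at this
          exact lt_of_le_of_ne this (hγ0 j)
        rw [div_pos_iff]
        right
        constructor
        · exact_mod_cast hj1
        · simp only [neg_neg_iff_pos]
          exact_mod_cast hk1
    have hsγ : ∑ j ∈ univ.erase k, (γ j : ℝ) = -(γ k : ℝ) := by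
      have h0 : (γ k : ℝ) + ∑ j ∈ univ.erase k, (γ j : ℝ) = ∑ j, (γ j : ℝ) :=
        Finset.add_sum_erase univ (fun j => (γ j : ℝ)) (Finset.mem_univ k)
      have h1 : (∑ j, (γ j : ℝ)) = 0 := by
        have : ((∑ j, γ j : ℤ) : ℝ) = 0 := by rw [hsum]; simp
        push_cast at this
        exact this
      rw [h1] at h0
      linarith
    have hsumlam : ∑ j ∈ univ.erase k, lam j = 1 := by
      rw [hlam, ← Finset.sum_div, hsγ, div_self (by simpa using hγk0)]
    have hcomb : mR k = ∑ j ∈ univ.erase k, lam j • mR j := by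
      funext i
      have h0 : (γ k : ℝ) * mR k i + ∑ j ∈ univ.erase k, (γ j : ℝ) * mR j i
          = ∑ j, (γ j : ℝ) * mR j i :=
        Finset.add_sum_erase univ (fun j => (γ j : ℝ) * mR j i) (Finset.mem_univ k)
      rw [hrelR i] at h0
      have h1 : ∑ j ∈ univ.erase k, (γ j : ℝ) * mR j i = -((γ k : ℝ) * mR k i) := by
        linarith
      have h2 : (∑ j ∈ univ.erase k, lam j • mR j) i
          = ∑ j ∈ univ.erase k, lam j * mR j i := by
        rw [Finset.sum_apply]; rfl
      rw [h2, hlam]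
      simp only [div_mul_eq_mul_div, ← Finset.sum_div]
      rw [h1]
      field_simp
    exact hcore k lam hsign hsumlam hcomb
  refine ⟨⟨?_, ?_⟩, fun k hk => (hkey k hk).2.2⟩
  · -- forward direction: simplex → unique sign
    rintro ⟨s, hcard, hindS, hhullS⟩
    have hcompl : sᶜ.card = 1 := by
      rw [Finset.card_compl, hcard, Fintype.card_fin]
      omega
    obtain ⟨k, hkc⟩ := Finset.card_eq_one.1 hcompl
    have hks : k ∉ s := by
      have : k ∈ sᶜ := by rw [hkc]; exact Finset.mem_singleton_self k
      simpa using this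
    have hmem : ∀ j : Fin (d + 2), j ≠ k → j ∈ s := by
      intro j hj
      by_contra hjs
      have : j ∈ sᶜ := Finset.mem_compl.2 hjs
      rw [hkc] at this
      exact hj (Finset.mem_singleton.1 this)
    have hinj : ∀ x ∈ s, ∀ y ∈ s, mR x = mR y → x = y := by
      intro x hx y hy hxy
      have h := hindS.injective (a₁ := ⟨x, hx⟩) (a₂ := ⟨y, hy⟩) hxy
      exact Subtype.ext_iff.1 h
    -- mR k in hull of image
    have hmk : mR k ∈ convexHull ℝ ((s.image mR : Finset (Fin d → ℝ)) : Set (Fin d → ℝ)) := by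
      rw [Finset.coe_image]
      rw [hhullS]
      exact subset_convexHull _ _ (Set.mem_range_self k)
    obtain ⟨w, hw0, hw1, hwsum⟩ := Finset.mem_convexHull'.1 hmk
    have hsum_im : ∑ j ∈ s, w (mR j) = 1 := by
      rw [← Finset.sum_image hinj]; exact hw1
    have hvec_im : ∑ j ∈ s, w (mR j) • mR j = mR k := by
      rw [Finset.sum_image (f := fun y => w y • y) hinj] at hwsum; exact hwsum
    set u : Fin (d + 2) → ℝ := fun j => if j = k then -1 else w (mR j) with hu
    have hse : univ.erase k = s := by
      ext j
      simp only [Finset.mem_erase, Finset.mem_univ, and_true]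
      constructor
      · exact fun h => hmem j h
      · intro h
        rintro rfl
        exact hks h
    have husum : ∑ j, u j = 0 := by
      rw [← Finset.add_sum_erase univ u (Finset.mem_univ k), hse]
      have : ∑ j ∈ s, u j = ∑ j ∈ s, w (mR j) := by
        refine Finset.sum_congr rfl fun j hj => ?_
        rw [hu]
        simp only [if_neg (fun h : j = k => hks (h ▸ hj))]
      rw [this, hsum_im, hu]
      simp
    have huvec : ∀ i, ∑ j, u j * mR j i = 0 := by
      intro i
      rw [← Finset.add_sum_erase univ (fun j => u j * mR j i) (Finset.mem_univ k), hse]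
      have h3 : ∑ j ∈ s, u j * mR j i = ∑ j ∈ s, w (mR j) * mR j i := by
        refine Finset.sum_congr rfl fun j hj => ?_
        rw [hu]
        simp only [if_neg (fun h : j = k => hks (h ▸ hj))]
      have h4 : ∑ j ∈ s, w (mR j) * mR j i = mR k i := by
        have := congrFun hvec_im i
        rw [Finset.sum_apply] at this
        exact this
      rw [h3, h4, hu]
      simp
    obtain ⟨c, hc⟩ := huniq u husum huvec
    have hck : c * (γ k : ℝ) = -1 := by
      rw [← hc k, hu]; simp
    have hc0 : c ≠ 0 := by
      intro h
      rw [h, zero_mul] at hck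
      norm_num at hck
    have hj_pos : ∀ j, j ≠ k → 0 < c * (γ j : ℝ) := by
      intro j hj
      have h5 : c * (γ j : ℝ) = w (mR j) := by
        rw [← hc j]
        show (if j = k then (-1 : ℝ) else w (mR j)) = w (mR j)
        rw [if_neg hj]
      have h6 : 0 ≤ w (mR j) := hw0 _ (Finset.mem_image_of_mem mR (hmem j hj))
      have h7 : c * (γ j : ℝ) ≠ 0 := mul_ne_zero hc0 (by exact_mod_cast hγ0 j)
      rw [h5] at h7
      rw [h5]
      exact lt_of_le_of_ne h6 (Ne.symm h7)
    rcases lt_or_gt_of_ne hc0 with hcneg | hcpos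
    · -- c < 0 : γ k > 0, γ j < 0 for j ≠ k
      right
      rw [Finset.card_eq_one]
      refine ⟨k, ?_⟩
      ext j
      simp only [Finset.mem_filter, Finset.mem_univ, true_and, Finset.mem_singleton]
      constructor
      · intro hγj
        by_contra hj
        have h10 := hj_pos j hj
        have h11 : ((γ j : ℤ) : ℝ) > 0 := by exact_mod_cast hγj
        nlinarith
      · rintro rfl
        by_contra hcon
        push_neg at hcon
        have h9 : ((γ j : ℤ) : ℝ) ≤ 0 := by exact_mod_cast hcon
        nlinarith
    · -- c > 0 : γ k < 0, γ j > 0 for j ≠ k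
      left
      rw [Finset.card_eq_one]
      refine ⟨k, ?_⟩
      ext j
      simp only [Finset.mem_filter, Finset.mem_univ, true_and, Finset.mem_singleton]
      constructor
      · intro hγj
        by_contra hj
        have h10 := hj_pos j hj
        have h11 : ((γ j : ℤ) : ℝ) < 0 := by exact_mod_cast hγj
        nlinarith
      · rintro rfl
        by_contra hcon
        push_neg at hcon
        have h9 : (0:ℝ) ≤ ((γ j : ℤ) : ℝ) := by exact_mod_cast hcon
        nlinarith
  · -- reverse direction
    rintro (h | h)
    · obtain ⟨k, hk⟩ := Finset.card_eq_one.1 h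
      obtain ⟨hc, hh, -⟩ := hkey k (Or.inl hk)
      exact ⟨univ.erase k, hc, hind k, hh⟩
    · obtain ⟨k, hk⟩ := Finset.card_eq_one.1 h
      obtain ⟨hc, hh, -⟩ := hkey k (Or.inr hk)
      exact ⟨univ.erase k, hc, hind k, hh⟩
end

section
/- Let γ ∈ ℤ^l be a prime gamma vector, m_1,…,m_l ∈ ℤ^d (d = l−2) with ∑ γ_j (1, m_j) = 0 generating all integral relations among the (1, m_j). Let u ∈ (ℂ^×)^l and consider F_u(x) = ∑_{j=1}^l u_j x^{m_j} on the torus (ℂ^×)^d. A point x ∈ (ℂ^×)^d is a singular point of the hypersurface {F_u = 0} (i.e. F_u(x) = 0 and all partial derivatives x_i ∂F_u/∂x_i vanish at x) if and only if (u_1 x^{m_1}, …, u_l x^{m_l}) = c·(γ_1, …, γ_l) for some c ∈ ℂ^×. Consequently, if ∏_j u_j^{γ_j} ≠ ∏_j γ_j^{γ_j}, the hypersurface {F_u = 0} ⊂ (ℂ^×)^d is smooth. -/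
open Finset

private lemma zpow_sum_aux {c : ℂ} (hc : c ≠ 0)
    {ι : Type*} (s : Finset ι) (f : ι → ℤ) :
    c ^ (∑ j ∈ s, f j) = ∏ j ∈ s, c ^ f j := by
  classical
  induction s using Finset.cons_induction with
  | empty => simp
  | cons a s ha ih => rw [Finset.sum_cons, Finset.prod_cons, zpow_add₀ hc, ih]

private lemma key_lemma (d : ℕ) (γ : Fin (d + 2) → ℤ) (hγ0 : γ 0 ≠ 0)
    (m : Fin (d + 2) → Fin d → ℤ)
    (hrel : ∀ r : Fin (d + 2) → ℤ,
      ((∑ j, r j = 0) ∧ (∀ i, ∑ j, r j * m j i = 0)) → ∃ c : ℤ, r = c • γ)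
    (hγsum : ∑ j, γ j = 0) (hγm : ∀ i, ∑ j, γ j * m j i = 0)
    (v : Fin (d + 2) → ℂ) (hv1 : ∑ j, v j = 0)
    (hv2 : ∀ i, ∑ j, (m j i : ℂ) * v j = 0) :
    ∃ c : ℂ, ∀ j, v j = c * γ j := by
  classical
  set A : Matrix (Fin (d + 1)) (Fin (d + 2)) ℚ :=
    Matrix.of (Fin.cons (fun _ => (1 : ℚ)) (fun i j => (m j i : ℚ))) with hAdef
  have hA0 : ∀ j, A 0 j = 1 := fun j => rfl
  have hAs : ∀ (i : Fin d) j, A i.succ j = (m j i : ℚ) := fun i j => by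
    simp [hAdef, Matrix.of_apply, Fin.cons_succ]
  set γℚ : Fin (d + 2) → ℚ := fun j => (γ j : ℚ) with hγℚ
  have hγℚ0 : γℚ ≠ 0 := by
    intro h
    have : (γ 0 : ℚ) = 0 := by simpa [hγℚ] using congrFun h 0
    exact hγ0 (by exact_mod_cast this)
  have hkermem : ∀ r : Fin (d + 2) → ℚ, A.mulVec r = 0 ↔
      ((∑ j, r j = 0) ∧ ∀ i, ∑ j, (m j i : ℚ) * r j = 0) := by
    intro r
    constructor
    · intro h
      constructor
      · have := congrFun h 0
        simpa [Matrix.mulVec, dotProduct, hA0] using this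
      · intro i
        have := congrFun h i.succ
        simpa [Matrix.mulVec, dotProduct, hAs] using this
    · rintro ⟨h1, h2⟩
      funext i
      refine Fin.cases ?_ ?_ i
      · simpa [Matrix.mulVec, dotProduct, hA0] using h1
      · intro i'
        simpa [Matrix.mulVec, dotProduct, hAs] using h2 i'
  have hker : LinearMap.ker A.mulVecLin = Submodule.span ℚ {γℚ} := by
    apply le_antisymm
    · intro r hr
      rw [LinearMap.mem_ker] at hr
      obtain ⟨h1, h2⟩ := (hkermem r).mp hr
      set N : ℕ := ∏ j, (r j).den with hNdef
      have hNne : (N : ℚ) ≠ 0 := by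
        have : 0 < N := Finset.prod_pos fun j _ => (r j).pos
        exact_mod_cast this.ne'
      set k : Fin (d + 2) → ℤ := fun j => ((N / (r j).den : ℕ) : ℤ) * (r j).num with hkdef
      have hk : ∀ j, ((k j : ℚ)) = (N : ℚ) * r j := by
        intro j
        have hd : (r j).den ∣ N := Finset.dvd_prod_of_mem _ (mem_univ j)
        have hden : ((r j).den : ℚ) ≠ 0 := by exact_mod_cast (r j).den_nz
        have h1' : ((N / (r j).den : ℕ) : ℚ) * ((r j).den : ℚ) = (N : ℚ) := by
          rw [← Nat.cast_mul, Nat.div_mul_cancel hd]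
        have h2' : ((r j).den : ℚ) * r j = ((r j).num : ℚ) := by
          rw [mul_comm]
          exact_mod_cast Rat.mul_den_eq_num (r j)
        rw [hkdef]
        push_cast
        calc ((N / (r j).den : ℕ) : ℚ) * ((r j).num : ℚ)
            = ((N / (r j).den : ℕ) : ℚ) * (((r j).den : ℚ) * r j) := by rw [h2']
          _ = (((N / (r j).den : ℕ) : ℚ) * ((r j).den : ℚ)) * r j := by ring
          _ = (N : ℚ) * r j := by rw [h1']
      have hk1 : ∑ j, k j = 0 := by
        have : ((∑ j, k j : ℤ) : ℚ) = 0 := by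
          push_cast [hk]
          rw [← Finset.mul_sum, h1, mul_zero]
        exact_mod_cast this
      have hk2 : ∀ i, ∑ j, k j * m j i = 0 := by
        intro i
        have : ((∑ j, k j * m j i : ℤ) : ℚ) = 0 := by
          push_cast [hk]
          have : ∀ j ∈ (univ : Finset (Fin (d+2))), (N : ℚ) * r j * (m j i : ℚ)
              = (N : ℚ) * ((m j i : ℚ) * r j) := fun j _ => by ring
          rw [Finset.sum_congr rfl this, ← Finset.mul_sum, h2 i, mul_zero]
        exact_mod_cast this
      obtain ⟨c, hc⟩ := hrel k ⟨hk1, hk2⟩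
      rw [Submodule.mem_span_singleton]
      refine ⟨(c : ℚ) / N, ?_⟩
      funext j
      have hkj : k j = c * γ j := by
        have := congrFun hc j
        simpa using this
      have := hk j
      rw [hkj] at this
      push_cast at this
      have : r j = (c : ℚ) * (γ j : ℚ) / N := by
        field_simp at this ⊢
        linarith [this]
      rw [Pi.smul_apply, smul_eq_mul, this, hγℚ]
      ring
    · rw [Submodule.span_le, Set.singleton_subset_iff]
      rw [SetLike.mem_coe, LinearMap.mem_ker]
      refine (hkermem γℚ).mpr ⟨?_, ?_⟩
      · simp only [hγℚ]
        exact_mod_cast congrArg (Int.cast : ℤ → ℚ) hγsum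
      · intro i
        have := hγm i
        have : ((∑ j, γ j * m j i : ℤ) : ℚ) = 0 := by exact_mod_cast congrArg (Int.cast : ℤ → ℚ) this
        push_cast at this
        rw [← this]
        exact Finset.sum_congr rfl fun j _ => by rw [hγℚ]; ring
  have hsurj : Function.Surjective A.mulVec := by
    have hrange : LinearMap.range A.mulVecLin = ⊤ := by
      apply Submodule.eq_top_of_finrank_eq
      have hrn := LinearMap.finrank_range_add_finrank_ker A.mulVecLin
      have hkr : Module.finrank ℚ (LinearMap.ker A.mulVecLin) = 1 := by
        rw [hker]
        exact finrank_span_singleton hγℚ0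
      rw [hkr, Module.finrank_fin_fun] at hrn
      rw [Module.finrank_fin_fun]
      omega
    intro y
    obtain ⟨r, hr⟩ := LinearMap.range_eq_top.mp hrange y
    exact ⟨r, hr⟩
  obtain ⟨B, hAB⟩ := Matrix.mulVec_surjective_iff_exists_right_inverse.mp hsurj
  set P : Matrix (Fin (d + 2)) (Fin (d + 2)) ℚ := 1 - B * A with hPdef
  have hAP : A * P = 0 := by
    rw [hPdef, Matrix.mul_sub, Matrix.mul_one, ← Matrix.mul_assoc, hAB, Matrix.one_mul, sub_self]
  have hcol : ∀ kk, ∃ t : ℚ, (fun j => P j kk) = t • γℚ := by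
    intro kk
    have hm : (fun j => P j kk) ∈ LinearMap.ker A.mulVecLin := by
      rw [LinearMap.mem_ker]
      funext i
      have : A.mulVecLin (fun j => P j kk) i = (A * P) i kk := by
        simp [Matrix.mulVecLin_apply, Matrix.mulVec, dotProduct, Matrix.mul_apply]
      rw [this, hAP]
      simp
    rw [hker, Submodule.mem_span_singleton] at hm
    obtain ⟨t, ht⟩ := hm
    exact ⟨t, ht.symm⟩
  choose t ht using hcol
  have hP : ∀ j kk, P j kk = t kk * γℚ j := by
    intro j kk
    have := congrFun (ht kk) j
    simpa using this
  have hentry : ∀ j kk, (if j = kk then (1 : ℚ) else 0) = t kk * γℚ j + ∑ i, B j i * A i kk := by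
    intro j kk
    have h1' : P j kk = (1 : Matrix (Fin (d+2)) (Fin (d+2)) ℚ) j kk - (B * A) j kk := by
      rw [hPdef]; simp [Matrix.sub_apply]
    rw [hP j kk, Matrix.one_apply, Matrix.mul_apply] at h1'
    linarith [h1']
  have hAv : ∀ i : Fin (d + 1), ∑ kk, ((A i kk : ℚ) : ℂ) * v kk = 0 := by
    intro i
    refine Fin.cases ?_ ?_ i
    · simpa [hA0] using hv1
    · intro i'
      simpa [hAs] using hv2 i'
  refine ⟨∑ kk, (t kk : ℂ) * v kk, fun j => ?_⟩
  have expand : ∀ kk, (if j = kk then (1 : ℂ) else 0) * v kk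
      = (t kk : ℂ) * v kk * (γ j : ℂ) + ∑ i, ((B j i : ℚ) : ℂ) * (((A i kk : ℚ) : ℂ) * v kk) := by
    intro kk
    have := hentry j kk
    have hcast : (if j = kk then (1 : ℂ) else 0)
        = (t kk : ℂ) * (γ j : ℂ) + ∑ i, ((B j i : ℚ) : ℂ) * ((A i kk : ℚ) : ℂ) := by
      have := congrArg (Rat.cast : ℚ → ℂ) this
      push_cast at this
      simpa [hγℚ, apply_ite (Rat.cast : ℚ → ℂ)] using this
    rw [hcast, add_mul, Finset.sum_mul]
    exact congrArg₂ (· + ·) (by ring) (Finset.sum_congr rfl fun i _ => by ring)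
  calc v j = ∑ kk, (if j = kk then (1 : ℂ) else 0) * v kk := by
        simp [Finset.sum_ite_eq]
    _ = ∑ kk, ((t kk : ℂ) * v kk * (γ j : ℂ)
          + ∑ i, ((B j i : ℚ) : ℂ) * (((A i kk : ℚ) : ℂ) * v kk)) := by
        exact Finset.sum_congr rfl fun kk _ => expand kk
    _ = (∑ kk, (t kk : ℂ) * v kk) * (γ j : ℂ)
          + ∑ i, ((B j i : ℚ) : ℂ) * (∑ kk, ((A i kk : ℚ) : ℂ) * v kk) := by
        rw [Finset.sum_add_distrib]
        congr 1
        · rw [Finset.sum_mul]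
        · rw [Finset.sum_comm]
          exact Finset.sum_congr rfl fun i _ => (Finset.mul_sum _ _ _).symm
    _ = (∑ kk, (t kk : ℂ) * v kk) * (γ j : ℂ) := by
        have hz : ∑ i, ((B j i : ℚ) : ℂ) * (∑ kk, ((A i kk : ℚ) : ℂ) * v kk) = 0 :=
          Finset.sum_eq_zero fun i _ => by rw [hAv i, mul_zero]
        rw [hz, add_zero]

/-- **Singular points of the circuit hypersurface.**
Let `γ ∈ ℤ^l` (`l = d + 2`) be a prime gamma vector and `m_1, …, m_l ∈ ℤ^d`
be such that the lattice of integral relations among the `(1, m_j)` is `ℤ·γ`.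
Fix `u ∈ (ℂ^×)^l` and set `F_u(x) = ∑ u_j x^{m_j}` on the torus `(ℂ^×)^d`.
A point `x` of the torus is a singular point of `{F_u = 0}` (i.e. `F_u(x) = 0`
and all logarithmic partials `x_i ∂F_u/∂x_i = ∑_j m_{ij} u_j x^{m_j}` vanish)
iff `(u_j x^{m_j})_j = c·γ` for some `c ≠ 0`.  Consequently, if
`∏ u_j^{γ_j} ≠ ∏ γ_j^{γ_j}`, then `{F_u = 0}` is smooth. -/
theorem circuit_singular_point_characterisation (d : ℕ) (γ : Fin (d + 2) → ℤ)
    (hγ0 : ∀ j, γ j ≠ 0) (hsum : ∑ j, γ j = 0)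
    (hgcd : Finset.univ.gcd γ = 1)
    (m : Fin (d + 2) → Fin d → ℤ)
    (hrel : ∀ r : Fin (d + 2) → ℤ,
      ((∑ j, r j = 0) ∧ (∀ i, ∑ j, r j * m j i = 0)) ↔ ∃ c : ℤ, r = c • γ)
    (u : Fin (d + 2) → ℂ) (hu : ∀ j, u j ≠ 0) :
    (∀ x : Fin d → ℂ, (∀ i, x i ≠ 0) →
      (((∑ j, u j * ∏ i, x i ^ m j i) = 0 ∧
          ∀ i, (∑ j, (m j i : ℂ) * (u j * ∏ i', x i' ^ m j i')) = 0) ↔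
        ∃ c : ℂ, c ≠ 0 ∧ ∀ j, u j * ∏ i, x i ^ m j i = c * γ j)) ∧
    ((∏ j, u j ^ γ j) ≠ (∏ j, (γ j : ℂ) ^ γ j) →
      ∀ x : Fin d → ℂ, (∀ i, x i ≠ 0) →
        ¬((∑ j, u j * ∏ i, x i ^ m j i) = 0 ∧
          ∀ i, (∑ j, (m j i : ℂ) * (u j * ∏ i', x i' ^ m j i')) = 0)) := by

  obtain ⟨-, hγm⟩ := (hrel γ).mpr ⟨1, (one_smul ℤ γ).symm⟩
  have hXne : ∀ (x : Fin d → ℂ), (∀ i, x i ≠ 0) → ∀ j, (∏ i, x i ^ m j i) ≠ 0 :=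
    fun x hx j => Finset.prod_ne_zero_iff.mpr fun i _ => zpow_ne_zero _ (hx i)
  have main : ∀ x : Fin d → ℂ, (∀ i, x i ≠ 0) →
      (((∑ j, u j * ∏ i, x i ^ m j i) = 0 ∧
          ∀ i, (∑ j, (m j i : ℂ) * (u j * ∏ i', x i' ^ m j i')) = 0) ↔
        ∃ c : ℂ, c ≠ 0 ∧ ∀ j, u j * ∏ i, x i ^ m j i = c * γ j) := by
    intro x hx
    constructor
    · rintro ⟨hF, hD⟩
      obtain ⟨c, hc⟩ := key_lemma d γ (hγ0 0) m (fun r => (hrel r).mp) hsum hγm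
        (fun j => u j * ∏ i, x i ^ m j i) hF (fun i => hD i)
      have h0 : u 0 * ∏ i, x i ^ m 0 i ≠ 0 := mul_ne_zero (hu 0) (hXne x hx 0)
      refine ⟨c, fun h => h0 ?_, hc⟩
      rw [hc 0, h, zero_mul]
    · rintro ⟨c, hc0, hc⟩
      constructor
      · rw [Finset.sum_congr rfl fun j _ => hc j, ← Finset.mul_sum]
        have h1 : ∑ j, ((γ j : ℤ) : ℂ) = 0 := by exact_mod_cast congrArg (Int.cast : ℤ → ℂ) hsum
        rw [h1, mul_zero]
      · intro i
        have h2 : ∑ j, ((γ j * m j i : ℤ) : ℂ) = 0 := by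
          exact_mod_cast congrArg (Int.cast : ℤ → ℂ) (hγm i)
        calc ∑ j, (m j i : ℂ) * (u j * ∏ i', x i' ^ m j i')
            = ∑ j, c * ((γ j * m j i : ℤ) : ℂ) := by
              refine Finset.sum_congr rfl fun j _ => ?_
              rw [hc j]
              push_cast
              ring
          _ = 0 := by rw [← Finset.mul_sum, h2, mul_zero]
  refine ⟨main, ?_⟩
  intro hne x hx hsing
  obtain ⟨c, hc0, hc⟩ := (main x hx).mp hsing
  apply hne
  have hu' : ∀ j, u j = c * (γ j : ℂ) * (∏ i, x i ^ m j i)⁻¹ := by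
    intro j
    calc u j = (u j * ∏ i, x i ^ m j i) * (∏ i, x i ^ m j i)⁻¹ :=
          (mul_inv_cancel_right₀ (hXne x hx j) (u j)).symm
      _ = c * (γ j : ℂ) * (∏ i, x i ^ m j i)⁻¹ := by rw [hc j]
  calc ∏ j, u j ^ γ j
      = ∏ j, (c ^ γ j * (γ j : ℂ) ^ γ j * ((∏ i, x i ^ m j i)⁻¹) ^ γ j) := by
        refine Finset.prod_congr rfl fun j _ => ?_
        rw [hu' j, mul_zpow, mul_zpow]
    _ = (∏ j, c ^ γ j) * (∏ j, (γ j : ℂ) ^ γ j)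
          * ∏ j, ((∏ i, x i ^ m j i)⁻¹) ^ γ j := by
        rw [Finset.prod_mul_distrib, Finset.prod_mul_distrib]
    _ = ∏ j, (γ j : ℂ) ^ γ j := by
        have h1 : ∏ j, c ^ γ j = 1 := by
          rw [← zpow_sum_aux hc0, hsum, zpow_zero]
        have hswap : ∀ j : Fin (d + 2), ((∏ i, x i ^ m j i)⁻¹) ^ γ j
            = ∏ i, x i ^ (m j i * -γ j) := by
          intro j
          rw [inv_zpow, ← zpow_neg, ← Finset.prod_zpow]
          exact Finset.prod_congr rfl fun i _ => (zpow_mul _ _ _).symm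
        have h2 : ∏ j, ((∏ i, x i ^ m j i)⁻¹) ^ γ j = 1 := by
          rw [Finset.prod_congr rfl fun j _ => hswap j, Finset.prod_comm]
          refine Finset.prod_eq_one fun i _ => ?_
          rw [← zpow_sum_aux (hx i)]
          have hz : ∑ j, m j i * -γ j = 0 := by
            have : ∀ j ∈ (univ : Finset (Fin (d + 2))), m j i * -γ j = -(γ j * m j i) :=
              fun j _ => by ring
            rw [Finset.sum_congr rfl this, Finset.sum_neg_distrib, hγm i, neg_zero]
          rw [hz, zpow_zero]
        rw [h1, h2, one_mul, mul_one]
end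

section
/- Let γ = (γ_1,…,γ_l) ∈ ℤ^l be a prime gamma vector with unique negative entry γ_1, and let m_1,…,m_l ∈ ℤ^d, k_1,…,k_l ∈ ℤ be as in a toric model (∑γ_j(1,m_j)=0 generating all relations, ∑γ_j k_j = 1). Set g = (γ_1 t^{k_1} x^{m_1})^{-1} ∑_{j=2}^l γ_j t^{k_j} x^{m_j}, a Laurent polynomial in x with coefficients in ℂ[t^{±1}]. Then for n ≥ 0, the constant term (coefficient of x^0) of g^n vanishes unless n = −γ_1 h for some integer h ≥ 0, in which case it equals the multinomial coefficient binom(−γ_1 h; γ_2 h, …, γ_l h) times (Γ t)^h, where Γ = ∏_j γ_j^{γ_j}. -/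
open Finset

/-- **Constant term of powers of `g`.**
Let `γ ∈ ℤ^l` (`l = d + 2`) be a prime gamma vector with unique negative entry
`γ_0`, toric model data `m_j ∈ ℤ^d`, `k_j ∈ ℤ` with `∑ γ_j (1, m_j) = 0`
generating all integral relations and `∑ γ_j k_j = 1`.  Let
`g = (γ_0 t^{k_0} x^{m_0})⁻¹ ∑_{j ≠ 0} γ_j t^{k_j} x^{m_j}`, a Laurent
polynomial in `x` and `t` (an element of the group algebra of `ℤ^d × ℤ`).
Then the coefficient of `x^0 t^e` in `g^n` vanishes unless `n = −γ_0 h` for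
some `h ≥ 0` and `e = h`, in which case it is the multinomial coefficient
`(−γ_0 h; γ_1 h, …, γ_{l-1} h)` times `Γ^h`, `Γ = ∏ γ_j^{γ_j}`. -/
theorem constant_term_of_g_pow (d : ℕ) (γ : Fin (d + 2) → ℤ)
    (hγ0 : ∀ j, γ j ≠ 0) (hsum : ∑ j, γ j = 0)
    (hgcd : Finset.univ.gcd γ = 1)
    (hneg : γ 0 < 0) (hpos : ∀ j, j ≠ 0 → 0 < γ j)
    (m : Fin (d + 2) → Fin d → ℤ) (k : Fin (d + 2) → ℤ)
    (hrel : ∀ r : Fin (d + 2) → ℤ,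
      ((∑ j, r j = 0) ∧ (∀ i, ∑ j, r j * m j i = 0)) ↔ ∃ c : ℤ, r = c • γ)
    (hk : ∑ j, γ j * k j = 1)
    (g : AddMonoidAlgebra ℂ ((Fin d → ℤ) × ℤ))
    (hg : g = ∑ j ∈ Finset.univ.erase 0,
      AddMonoidAlgebra.single (m j - m 0, k j - k 0) ((γ j : ℂ) / (γ 0 : ℂ)))
    (n : ℕ) :
    ((¬ ∃ h : ℕ, (n : ℤ) = -γ 0 * h) →
      ∀ e : ℤ, (g ^ n).coeff ((0 : Fin d → ℤ), e) = 0) ∧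
    (∀ h : ℕ, (n : ℤ) = -γ 0 * h →
      ∀ e : ℤ, (g ^ n).coeff ((0 : Fin d → ℤ), e) =
        if e = (h : ℤ) then
          (Nat.multinomial (Finset.univ.erase 0) (fun j => (γ j * h).toNat) : ℂ) *
            (∏ j, (γ j : ℂ) ^ γ j) ^ h
        else 0) := by
  classical
  set s : Finset (Fin (d + 2)) := Finset.univ.erase 0 with hs
  have h0s : (0 : Fin (d + 2)) ∉ s := Finset.notMem_erase _ _
  have h1ne : (1 : Fin (d + 2)) ≠ 0 := one_ne_zero
  have h1s : (1 : Fin (d + 2)) ∈ s := Finset.mem_erase.mpr ⟨h1ne, Finset.mem_univ _⟩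
  have hγ0C : (γ 0 : ℂ) ≠ 0 := Int.cast_ne_zero.mpr (hγ0 0)
  obtain ⟨-, hγm⟩ := (hrel γ).mpr ⟨1, (one_smul _ _).symm⟩
  have hsplit : ∀ f : Fin (d + 2) → ℤ, ∑ j ∈ s, f j = (∑ j, f j) - f 0 := by
    intro f
    rw [← Finset.add_sum_erase Finset.univ f (Finset.mem_univ 0)]
    ring
  have hsγ : ∑ j ∈ s, γ j = -γ 0 := by rw [hsplit, hsum]; ring
  have hsγm : ∀ i, ∑ j ∈ s, γ j * m j i = -(γ 0 * m 0 i) := by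
    intro i; rw [hsplit (fun j => γ j * m j i), hγm i]; ring
  have hsγk : ∑ j ∈ s, γ j * k j = 1 - γ 0 * k 0 := by
    rw [hsplit (fun j => γ j * k j), hk]
  have hγkk : ∑ j ∈ s, γ j * (k j - k 0) = 1 := by
    have h1 : ∑ j ∈ s, γ j * (k j - k 0) = ∑ j ∈ s, (γ j * k j - γ j * k 0) :=
      Finset.sum_congr rfl fun j _ => by ring
    rw [h1, Finset.sum_sub_distrib, ← Finset.sum_mul, hsγ, hsγk]; ring
  have hγmm : ∀ i, ∑ j ∈ s, γ j * (m j i - m 0 i) = 0 := by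
    intro i
    have h1 : ∑ j ∈ s, γ j * (m j i - m 0 i) = ∑ j ∈ s, (γ j * m j i - γ j * m 0 i) :=
      Finset.sum_congr rfl fun j _ => by ring
    rw [h1, Finset.sum_sub_distrib, ← Finset.sum_mul, hsγ, hsγm i]; ring
  have hcomb : ∀ (c : ℤ) (f g' : Fin (d + 2) → ℤ), (∀ j ∈ s, f j = c * γ j) →
      ∑ j ∈ s, f j * g' j = c * ∑ j ∈ s, γ j * g' j := by
    intro c f g' hf
    rw [Finset.mul_sum]
    exact Finset.sum_congr rfl fun j hj => by rw [hf j hj]; ring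
  -- expansion of g ^ n
  have happly : ∀ p : (Fin d → ℤ) × ℤ, (g ^ n).coeff p =
      ∑ a ∈ Finset.piAntidiag s n,
        if (∑ j ∈ s, a j • ((m j - m 0, k j - k 0) : (Fin d → ℤ) × ℤ)) = p
        then (Nat.multinomial s a : ℂ) * ∏ j ∈ s, ((γ j : ℂ) / (γ 0 : ℂ)) ^ a j
        else 0 := by
    intro p
    rw [hg, Finset.sum_pow_eq_sum_piAntidiag, AddMonoidAlgebra.coeff_sum, Finsupp.finset_sum_apply]
    refine Finset.sum_congr rfl fun a ha => ?_
    simp only [AddMonoidAlgebra.single_pow]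
    rw [AddMonoidAlgebra.prod_single, ← nsmul_eq_mul, AddMonoidAlgebra.smul_single,
      AddMonoidAlgebra.coeff_single, Finsupp.single_apply]
    simp [nsmul_eq_mul]
  -- key structural lemma
  have key : ∀ e : ℤ, ∀ a : Fin (d + 2) → ℕ, a ∈ Finset.piAntidiag s n →
      (∑ j ∈ s, a j • ((m j - m 0, k j - k 0) : (Fin d → ℤ) × ℤ)) = ((0 : Fin d → ℤ), e) →
      ∃ c : ℕ, (n : ℤ) = -γ 0 * c ∧ e = c ∧ ∀ j ∈ s, (a j : ℤ) = γ j * c := by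
    intro e a ha hpt
    rw [Finset.mem_piAntidiag] at ha
    obtain ⟨hasum, hamem⟩ := ha
    have hasumZ : ∑ j ∈ s, (a j : ℤ) = (n : ℤ) := by exact_mod_cast hasum
    have hfst := congrArg Prod.fst hpt
    have hsnd := congrArg Prod.snd hpt
    simp only [Prod.fst_sum, Prod.snd_sum, Prod.smul_fst, Prod.smul_snd] at hfst hsnd
    have hfsti : ∀ i, ∑ j ∈ s, (a j : ℤ) * (m j i - m 0 i) = 0 := by
      intro i
      have := congrFun hfst i
      simpa [Finset.sum_apply, nsmul_eq_mul] using this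
    have hsndZ : ∑ j ∈ s, (a j : ℤ) * (k j - k 0) = e := by
      simpa [nsmul_eq_mul] using hsnd
    set r : Fin (d + 2) → ℤ := fun j => if j = 0 then -(n : ℤ) else (a j : ℤ) with hr
    have hrsum : ∑ j, r j = 0 := by
      rw [← Finset.add_sum_erase Finset.univ r (Finset.mem_univ 0)]
      have : ∑ j ∈ s, r j = ∑ j ∈ s, (a j : ℤ) :=
        Finset.sum_congr rfl fun j hj => by
          simp [hr, (Finset.mem_erase.mp hj).1]
      rw [this, hasumZ]
      simp [hr]
    have hrm : ∀ i, ∑ j, r j * m j i = 0 := by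
      intro i
      rw [← Finset.add_sum_erase Finset.univ (fun j => r j * m j i) (Finset.mem_univ 0)]
      have h1 : ∑ j ∈ s, r j * m j i = ∑ j ∈ s, (a j : ℤ) * m j i :=
        Finset.sum_congr rfl fun j hj => by
          simp [hr, (Finset.mem_erase.mp hj).1]
      have h2 : ∑ j ∈ s, (a j : ℤ) * m j i = (n : ℤ) * m 0 i := by
        have := hfsti i
        have h3 : ∑ j ∈ s, ((a j : ℤ) * m j i - (a j : ℤ) * m 0 i) = 0 := by
          rw [← this]; exact Finset.sum_congr rfl fun j hj => by ring
        rw [Finset.sum_sub_distrib, ← Finset.sum_mul, hasumZ] at h3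
        linarith
      rw [h1, h2]
      simp [hr]
    obtain ⟨c, hc⟩ := (hrel r).mp ⟨hrsum, hrm⟩
    have hc0 : -(n : ℤ) = c * γ 0 := by
      have := congrFun hc 0
      simpa [hr] using this
    have hcj : ∀ j ∈ s, (a j : ℤ) = c * γ j := by
      intro j hj
      have := congrFun hc j
      simpa [hr, (Finset.mem_erase.mp hj).1] using this
    have hcnn : 0 ≤ c := by
      have h1 := hcj 1 h1s
      have h2 := hpos 1 h1ne
      nlinarith [Int.natCast_nonneg (a 1)]
    refine ⟨c.toNat, ?_, ?_, ?_⟩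
    · rw [Int.toNat_of_nonneg hcnn]; linarith
    · rw [Int.toNat_of_nonneg hcnn]
      have h3 := hcomb c (fun j => (a j : ℤ)) (fun j => k j - k 0) hcj
      rw [hsndZ, hγkk] at h3
      rw [h3]; ring
    · intro j hj
      rw [Int.toNat_of_nonneg hcnn, hcj j hj]; ring
  constructor
  · intro hne e
    rw [happly]
    refine Finset.sum_eq_zero fun a ha => ?_
    rw [if_neg]
    intro hpt
    obtain ⟨c, hc1, -, -⟩ := key e a ha hpt
    exact hne ⟨c, hc1⟩
  · intro h hn e
    set a0 : Fin (d + 2) → ℕ := fun j => (γ j * h).toNat with ha0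
    have ha00 : a0 0 = 0 := by
      have : γ 0 * (h : ℤ) ≤ 0 := mul_nonpos_of_nonpos_of_nonneg hneg.le (by positivity)
      simpa [ha0] using Int.toNat_of_nonpos this
    have htoNat : ∀ j ∈ s, ((a0 j : ℤ)) = γ j * h := by
      intro j hj
      exact Int.toNat_of_nonneg
        (mul_nonneg (hpos j (Finset.mem_erase.mp hj).1).le (by positivity))
    have ha0sum : ∑ j ∈ s, a0 j = n := by
      have h1 : ∑ j ∈ s, ((a0 j : ℤ)) = (n : ℤ) := by
        rw [show ∑ j ∈ s, ((a0 j : ℤ)) = ∑ j ∈ s, γ j * (h : ℤ) from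
          Finset.sum_congr rfl htoNat, ← Finset.sum_mul, hsγ, hn]
      have h2 : ((∑ j ∈ s, a0 j : ℕ) : ℤ) = (n : ℤ) := by rw [Nat.cast_sum]; exact h1
      exact_mod_cast h2
    have ha0mem : a0 ∈ Finset.piAntidiag s n := by
      rw [Finset.mem_piAntidiag]
      refine ⟨ha0sum, fun i hi => ?_⟩
      rcases eq_or_ne i 0 with rfl | hne0
      · exact absurd ha00 hi
      · exact Finset.mem_erase.mpr ⟨hne0, Finset.mem_univ _⟩
    have hpt0 : (∑ j ∈ s, a0 j • ((m j - m 0, k j - k 0) : (Fin d → ℤ) × ℤ)) =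
        ((0 : Fin d → ℤ), (h : ℤ)) := by
      refine Prod.ext ?_ ?_
      · rw [Prod.fst_sum]
        simp only [Prod.smul_fst]
        funext i
        rw [Finset.sum_apply]
        simp only [Pi.smul_apply, Pi.sub_apply, nsmul_eq_mul]
        have h3 := hcomb (h : ℤ) (fun j => (a0 j : ℤ)) (fun j => m j i - m 0 i)
          (fun j hj => (htoNat j hj).trans (mul_comm _ _))
        rw [hγmm i, mul_zero] at h3
        simpa using h3
      · rw [Prod.snd_sum]
        simp only [Prod.smul_snd, nsmul_eq_mul]
        have h3 := hcomb (h : ℤ) (fun j => (a0 j : ℤ)) (fun j => k j - k 0)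
          (fun j hj => (htoNat j hj).trans (mul_comm _ _))
        rw [hγkk, mul_one] at h3
        exact h3
    have hneγ0 : (-γ 0 : ℤ) ≠ 0 := neg_ne_zero.mpr (hγ0 0)
    have huniq : ∀ c : ℕ, (n : ℤ) = -γ 0 * c → c = h := by
      intro c hc
      have : (-γ 0 : ℤ) * c = -γ 0 * h := by rw [← hc, hn]
      exact_mod_cast mul_left_cancel₀ hneγ0 this
    have hval : ∏ j ∈ s, ((γ j : ℂ) / (γ 0 : ℂ)) ^ a0 j =
        (∏ j, (γ j : ℂ) ^ γ j) ^ h := by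
      have hL : ∏ j ∈ s, ((γ j : ℂ) / (γ 0 : ℂ)) ^ a0 j =
          (∏ j ∈ s, (γ j : ℂ) ^ a0 j) / (γ 0 : ℂ) ^ n := by
        rw [← ha0sum]
        rw [← Finset.prod_pow_eq_pow_sum, ← Finset.prod_div_distrib]
        exact Finset.prod_congr rfl fun j hj => div_pow _ _ _
      have hR : (∏ j, (γ j : ℂ) ^ γ j) ^ h =
          (γ 0 : ℂ) ^ (γ 0 * (h : ℤ)) * ∏ j ∈ s, (γ j : ℂ) ^ (γ j * (h : ℤ)) := by
        rw [← Finset.prod_pow]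
        rw [← Finset.mul_prod_erase Finset.univ _ (Finset.mem_univ 0)]
        rw [← zpow_natCast ((γ 0 : ℂ) ^ γ 0) h, ← zpow_mul]
        congr 1
        exact Finset.prod_congr rfl fun j hj => by
          rw [← zpow_natCast ((γ j : ℂ) ^ γ j) h, ← zpow_mul]
      rw [hL, hR]
      have h1 : (γ 0 : ℂ) ^ (γ 0 * (h : ℤ)) = ((γ 0 : ℂ) ^ n)⁻¹ := by
        have : γ 0 * (h : ℤ) = -(n : ℤ) := by rw [hn]; ring
        rw [this, zpow_neg, zpow_natCast]
      have h2 : ∏ j ∈ s, (γ j : ℂ) ^ (γ j * (h : ℤ)) = ∏ j ∈ s, (γ j : ℂ) ^ a0 j :=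
        Finset.prod_congr rfl fun j hj => by
          rw [← htoNat j hj, zpow_natCast]
      rw [h1, h2]
      rw [div_eq_mul_inv, mul_comm]
    rw [happly]
    rcases eq_or_ne e (h : ℤ) with rfl | he
    · rw [if_pos rfl]
      rw [Finset.sum_eq_single_of_mem a0 ha0mem]
      · rw [if_pos hpt0, hval]
      · intro a ha hne'
        rw [if_neg]
        intro hpt
        obtain ⟨c, hc1, -, hc3⟩ := key (h : ℤ) a ha hpt
        have hch : c = h := huniq c hc1
        subst hch
        apply hne'
        have ha0' : a 0 = 0 := by
          by_contra hne0
          exact h0s ((Finset.mem_piAntidiag.mp ha).2 0 hne0)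
        funext j
        rcases eq_or_ne j 0 with rfl | hj0
        · rw [ha0', ha00]
        · have hj : j ∈ s := Finset.mem_erase.mpr ⟨hj0, Finset.mem_univ _⟩
          have : (a j : ℤ) = (a0 j : ℤ) := by rw [hc3 j hj, htoNat j hj]
          exact_mod_cast this
    · rw [if_neg he]
      refine Finset.sum_eq_zero fun a ha => ?_
      rw [if_neg]
      intro hpt
      obtain ⟨c, hc1, hc2, -⟩ := key e a ha hpt
      exact he (by rw [hc2, huniq c hc1])
end

section
/- Let γ_1, …, γ_l be nonzero integers summing to zero with gcd 1, exactly one of which (say γ_1) is negative. Then the power series ∑_{h=0}^∞ (−1)^{γ_1 h} binom(−γ_1 h; γ_2 h, …, γ_l h) (Γ t)^h, with Γ = ∏_j γ_j^{γ_j}, equals the generalized hypergeometric series F(α; β | t) = ∑_{k≥0} ∏_i (α_i)_k / ∏_i (β_i)_k · t^k, where α, β ∈ (0,1]^n are the multisets of rationals (with α_i − β_j ∉ ℤ) determined by (x^{−γ_1}−1)/∏_{j≥2}(x^{γ_j}−1) = ∏_i(x − e^{2πiα_i})/∏_i(x − e^{2πiβ_i}). -/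
open Finset Polynomial Complex

noncomputable def eee (θ : ℚ) : ℂ := Complex.exp (2 * (Real.pi : ℂ) * Complex.I * (θ : ℂ))

lemma eee_injOn {θ₁ θ₂ : ℚ} (h1 : θ₁ ∈ Set.Ioc (0:ℚ) 1) (h2 : θ₂ ∈ Set.Ioc (0:ℚ) 1)
    (h : eee θ₁ = eee θ₂) : θ₁ = θ₂ := by
  rw [eee, eee, Complex.exp_eq_exp_iff_exists_int] at h
  obtain ⟨k, hk⟩ := h
  have hne : (2 * (Real.pi : ℂ) * Complex.I) ≠ 0 := by
    simp [Real.pi_ne_zero, Complex.I_ne_zero]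
  have h0 : ((θ₁ : ℂ) - θ₂ - k) * (2 * (Real.pi : ℂ) * Complex.I) = 0 := by
    linear_combination hk
  have h3 : (θ₁ : ℂ) - θ₂ = k := by
    rcases mul_eq_zero.mp h0 with h' | h'
    · linear_combination h'
    · exact absurd h' hne
  have h4 : θ₁ - θ₂ = (k : ℚ) := by exact_mod_cast h3
  obtain ⟨hb1, hb2⟩ := h1; obtain ⟨hb3, hb4⟩ := h2
  have h5 : (-1 : ℚ) < k := by rw [← h4]; linarith
  have h6 : (k : ℚ) < 1 := by rw [← h4]; linarith
  have h5' : -1 < k := by exact_mod_cast h5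
  have h6' : k < 1 := by exact_mod_cast h6
  have hk0 : k = 0 := by omega
  rw [hk0] at h4; push_cast at h4; linarith

lemma multiset_eq_of_map_eee (s : Multiset ℚ) :
    ∀ t : Multiset ℚ, (∀ x ∈ s, x ∈ Set.Ioc (0:ℚ) 1) → (∀ x ∈ t, x ∈ Set.Ioc (0:ℚ) 1) →
    s.map eee = t.map eee → s = t := by
  induction s using Multiset.induction with
  | empty => intro t _ _ h; simpa using (Multiset.map_eq_zero.mp h.symm).symm
  | cons a s ih =>
    intro t hs ht h
    have ha : eee a ∈ t.map eee := by
      rw [← h]; simp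
    obtain ⟨b, hb, hba⟩ := Multiset.mem_map.mp ha
    have hab : b = a := eee_injOn (ht b hb) (hs a (by simp)) hba
    subst hab
    have ht' : t = b ::ₘ t.erase b := (Multiset.cons_erase hb).symm
    rw [ht'] at h ⊢
    simp only [Multiset.map_cons] at h
    have h' : s.map eee = (t.erase b).map eee := (Multiset.cons_inj_right _).mp h
    rw [ih (t.erase b) (fun x hx => hs x (by simp [hx]))
      (fun x hx => ht x (Multiset.mem_of_mem_erase hx)) h']

noncomputable def rootsOf (a : ℕ) : Multiset ℚ :=
  (Multiset.range a).map (fun m : ℕ => ((m : ℚ) + 1) / a)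

lemma mem_rootsOf {a : ℕ} (ha : 0 < a) {x : ℚ} (hx : x ∈ rootsOf a) :
    x ∈ Set.Ioc (0:ℚ) 1 := by
  rw [rootsOf, Multiset.mem_map] at hx
  obtain ⟨m, hm, rfl⟩ := hx
  rw [Multiset.mem_range] at hm
  have ha' : (0:ℚ) < a := by exact_mod_cast ha
  constructor
  · positivity
  · rw [div_le_one ha']
    have : (m:ℚ) + 1 ≤ a := by exact_mod_cast Nat.succ_le_of_lt hm
    exact this

lemma Xpow_sub_one_eq (a : ℕ) (ha : 0 < a) :
    (X ^ a - 1 : ℂ[X]) = ((rootsOf a).map (fun θ => X - C (eee θ))).prod := by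
  have hζ : IsPrimitiveRoot (Complex.exp (2 * Real.pi * Complex.I / a)) a :=
    Complex.isPrimitiveRoot_exp a ha.ne'
  have he : (Complex.exp (2 * Real.pi * Complex.I / a)) ^ a = 1 := hζ.pow_eq_one
  have h1 : (X ^ a - C 1 : ℂ[X]) =
      ∏ i ∈ Finset.range a, (X - C ((Complex.exp (2 * Real.pi * Complex.I / a)) ^ i *
        (Complex.exp (2 * Real.pi * Complex.I / a)))) :=
    X_pow_sub_C_eq_prod hζ ha he
  rw [map_one] at h1
  rw [h1, rootsOf, Multiset.map_map]
  rw [Finset.prod_eq_multiset_prod]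
  congr 1
  apply Multiset.map_congr rfl
  intro m hm
  simp only [Function.comp_apply]
  congr 2
  rw [← pow_succ, ← Complex.exp_nat_mul, eee]
  congr 1
  have ha' : (a : ℂ) ≠ 0 := Nat.cast_ne_zero.mpr ha.ne'
  push_cast
  field_simp

lemma map_sum_prod' {ι M : Type*} [CommMonoid M] (s : Finset ι) (f : ι → Multiset ℚ)
    (g : ℚ → M) : ((∑ j ∈ s, f j).map g).prod = ∏ j ∈ s, ((f j).map g).prod := by
  classical
  induction s using Finset.induction with
  | empty => simp
  | insert hj ih => simp_all [Finset.sum_insert, Finset.prod_insert, Multiset.map_add]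

lemma prod_map_rootsOf {M : Type*} [CommMonoid M] (a : ℕ) (f : ℚ → M) :
    ((rootsOf a).map f).prod = ∏ m ∈ Finset.range a, f (((m:ℚ)+1)/a) := by
  rw [rootsOf, Multiset.map_map, Finset.prod_eq_multiset_prod]
  rfl

lemma prod_map_univval {n : ℕ} {M : Type*} [CommMonoid M] (g : Fin n → ℚ) (f : ℚ → M) :
    ((Finset.univ.val.map g).map f).prod = ∏ i, f (g i) := by
  rw [Multiset.map_map, Finset.prod_eq_multiset_prod]
  rfl

lemma poch_eval_prod (x : ℂ) (h : ℕ) :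
    (ascPochhammer ℂ h).eval x = ∏ k ∈ Finset.range h, (x + k) := by
  induction h with
  | zero => simp
  | succ h ih => simp [ascPochhammer_succ_right, Finset.prod_range_succ, ih]

lemma fact_prod (N c : ℕ) : ((N + c).factorial : ℂ) =
    (N.factorial : ℂ) * ∏ m ∈ Finset.range c, ((N : ℂ) + m + 1) := by
  induction c with
  | zero => simp
  | succ c ih =>
    rw [← add_assoc, Nat.factorial_succ, Finset.prod_range_succ]
    push_cast [ih]; ring

lemma prod_lin (a : ℕ) (h : ℕ) (ha : 0 < a) :
    (∏ m ∈ Finset.range a, ((a : ℂ) * h + m + 1)) =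
      (a : ℂ) ^ a * ∏ m ∈ Finset.range a, ((h : ℂ) + ((((m : ℚ) + 1) / a : ℚ) : ℂ)) := by
  have ha' : (a : ℂ) ≠ 0 := Nat.cast_ne_zero.mpr ha.ne'
  rw [show ((a:ℂ))^a = ∏ _m ∈ Finset.range a, (a:ℂ) by rw [Finset.prod_const, Finset.card_range],
    ← Finset.prod_mul_distrib]
  apply Finset.prod_congr rfl
  intro m _
  push_cast
  field_simp
  ring

lemma cast_add_nat_ne (q : ℚ) (hq : 0 < q) (k : ℕ) : ((k : ℂ) + (q : ℂ)) ≠ 0 := by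
  have : (((k + q : ℚ)) : ℂ) ≠ 0 := by
    rw [Rat.cast_ne_zero]; positivity
  push_cast at this
  convert this using 1

/-- **The multinomial series is the hypergeometric series.**
Let `γ_0, …, γ_{l-1}` (`l = d+2`) be nonzero integers summing to zero with
gcd 1, with `γ_0` the unique negative entry.  Let `α, β ∈ ((0,1] ∩ ℚ)^n` with
`α_i − β_j ∉ ℤ` be determined by
`(x^{−γ_0}−1)/∏_{j≥1}(x^{γ_j}−1) = ∏(x−e^{2πiα_i})/∏(x−e^{2πiβ_i})`.
Then the series `∑_h (−1)^{γ_0 h}·binom(−γ_0 h; γ_1 h, …)·(Γ t)^h` equals the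
hypergeometric series `F(α; β | t)` coefficientwise (coefficient of `t^h`). -/
theorem multinomial_series_eq_hypergeometric (d : ℕ) (γ : Fin (d + 2) → ℤ)
    (hγ0 : ∀ j, γ j ≠ 0) (hsum : ∑ j, γ j = 0)
    (hgcd : Finset.univ.gcd γ = 1)
    (hneg : γ 0 < 0) (hpos : ∀ j, j ≠ 0 → 0 < γ j)
    (n : ℕ) (α β : Fin n → ℚ)
    (hα : ∀ i, 0 < α i ∧ α i ≤ 1) (hβ : ∀ i, 0 < β i ∧ β i ≤ 1)
    (hαβ : ∀ i j, ¬ ∃ z : ℤ, α i - β j = (z : ℚ))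
    (hfrac : (X ^ (-γ 0).toNat - 1) *
        ∏ i, (X - C (Complex.exp (2 * (Real.pi : ℂ) * Complex.I * (β i : ℂ)))) =
      (∏ j ∈ Finset.univ.erase 0, (X ^ (γ j).toNat - 1)) *
        ∏ i, (X - C (Complex.exp (2 * (Real.pi : ℂ) * Complex.I * (α i : ℂ))))) :
    ∀ h : ℕ,
      ((-1 : ℂ) ^ (γ 0 * h)) *
          (Nat.multinomial (Finset.univ.erase 0) (fun j => (γ j * h).toNat) : ℂ) *
          (∏ j, (γ j : ℂ) ^ γ j) ^ h =
        (∏ i, (ascPochhammer ℂ h).eval (α i : ℂ)) /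
          (∏ i, (ascPochhammer ℂ h).eval (β i : ℂ)) := by
  classical
  set a0 : ℕ := (-γ 0).toNat with ha0def
  have hγ0eq : γ 0 = -(a0 : ℤ) := by
    rw [ha0def, Int.toNat_of_nonneg (by omega)]; ring
  have ha0pos : 0 < a0 := by omega
  set E : Finset (Fin (d+2)) := Finset.univ.erase 0 with hEdef
  have hajpos : ∀ j ∈ E, 0 < (γ j).toNat := by
    intro j hj
    have := hpos j (Finset.mem_erase.mp hj).1
    omega
  have hajeq : ∀ j ∈ E, γ j = ((γ j).toNat : ℤ) := by
    intro j hj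
    exact (Int.toNat_of_nonneg (hpos j (Finset.mem_erase.mp hj).1).le).symm
  have hsumE : γ 0 + ∑ j ∈ E, γ j = 0 := by
    rw [Finset.add_sum_erase _ _ (Finset.mem_univ 0)]; exact hsum
  have hsum' : ∑ j ∈ E, (γ j).toNat = a0 := by
    have h1 : ((∑ j ∈ E, (γ j).toNat : ℕ) : ℤ) = ∑ j ∈ E, γ j := by
      push_cast
      exact Finset.sum_congr rfl (fun j hj => (hajeq j hj).symm)
    omega
  -- the multiset identity
  set M1 : Multiset ℚ := rootsOf a0 + Finset.univ.val.map β with hM1def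
  set M2 : Multiset ℚ := (∑ j ∈ E, rootsOf (γ j).toNat) + Finset.univ.val.map α with hM2def
  have hP : (M1.map (fun θ => X - C (eee θ))).prod = (M2.map (fun θ => X - C (eee θ))).prod := by
    rw [hM1def, hM2def, Multiset.map_add, Multiset.prod_add, Multiset.map_add,
      Multiset.prod_add, map_sum_prod']
    rw [← Xpow_sub_one_eq a0 ha0pos]
    have hR : ∀ j ∈ E, ((rootsOf (γ j).toNat).map (fun θ => X - C (eee θ))).prod =
        X ^ (γ j).toNat - 1 := fun j hj => (Xpow_sub_one_eq _ (hajpos j hj)).symm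
    rw [Finset.prod_congr rfl hR]
    have hBm : ((Finset.univ.val.map β).map (fun θ => X - C (eee θ))).prod =
        ∏ i, (X - C (Complex.exp (2 * (Real.pi : ℂ) * Complex.I * (β i : ℂ)))) := by
      rw [prod_map_univval]; rfl
    have hAm : ((Finset.univ.val.map α).map (fun θ => X - C (eee θ))).prod =
        ∏ i, (X - C (Complex.exp (2 * (Real.pi : ℂ) * Complex.I * (α i : ℂ)))) := by
      rw [prod_map_univval]; rfl
    rw [hBm, hAm]
    exact hfrac
  have hroots : M1.map eee = M2.map eee := by
    have h1 := congrArg Polynomial.roots hP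
    rwa [show (M1.map (fun θ => X - C (eee θ))) = ((M1.map eee).map (fun z => X - C z)) by
        rw [Multiset.map_map]; rfl,
      show (M2.map (fun θ => X - C (eee θ))) = ((M2.map eee).map (fun z => X - C z)) by
        rw [Multiset.map_map]; rfl,
      roots_multiset_prod_X_sub_C, roots_multiset_prod_X_sub_C] at h1
  have hM : M1 = M2 := by
    apply multiset_eq_of_map_eee M1 M2 _ _ hroots
    · intro x hx
      rw [hM1def, Multiset.mem_add] at hx
      rcases hx with hx | hx
      · exact mem_rootsOf ha0pos hx
      · obtain ⟨i, _, rfl⟩ := Multiset.mem_map.mp hx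
        exact ⟨(hβ i).1, (hβ i).2⟩
    · intro x hx
      rw [hM2def, Multiset.mem_add] at hx
      rcases hx with hx | hx
      · rw [Multiset.mem_sum] at hx
        obtain ⟨j, hj, hx⟩ := hx
        exact mem_rootsOf (hajpos j hj) hx
      · obtain ⟨i, _, rfl⟩ := Multiset.mem_map.mp hx
        exact ⟨(hα i).1, (hα i).2⟩
  -- the key product identity
  have key : ∀ h : ℕ,
      (∏ m ∈ Finset.range a0, ((h:ℂ) + ((((m:ℚ)+1)/a0 : ℚ) : ℂ))) * (∏ i, ((h:ℂ) + (β i : ℂ)))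
      = (∏ j ∈ E, ∏ m ∈ Finset.range (γ j).toNat,
          ((h:ℂ) + ((((m:ℚ)+1)/(γ j).toNat : ℚ) : ℂ))) * ∏ i, ((h:ℂ) + (α i : ℂ)) := by
    intro h
    have h1 := congrArg (fun s : Multiset ℚ => (s.map (fun θ : ℚ => ((h:ℂ) + (θ:ℂ)))).prod) hM
    simp only [hM1def, hM2def, Multiset.map_add, Multiset.prod_add, map_sum_prod',
      prod_map_rootsOf, prod_map_univval] at h1
    exact h1
  -- notation
  set W : ℂ := ∏ j ∈ E, ((γ j).toNat : ℂ) ^ ((γ j).toNat) with hWdef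
  have hWne : W ≠ 0 := by
    apply Finset.prod_ne_zero_iff.mpr
    intro j hj
    exact pow_ne_zero _ (Nat.cast_ne_zero.mpr (hajpos j hj).ne')
  have ha0ne : ((a0:ℂ))^a0 ≠ 0 := pow_ne_zero _ (Nat.cast_ne_zero.mpr ha0pos.ne')
  -- sign * Gamma
  have hsΓ : ((-1:ℂ)) ^ (γ 0) * (∏ j, (γ j : ℂ) ^ γ j) = W / ((a0:ℂ))^a0 := by
    rw [← Finset.mul_prod_erase Finset.univ _ (Finset.mem_univ 0)]
    have hsq : ((-1:ℂ))^a0 * ((-1:ℂ))^a0 = 1 := by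
      rw [← pow_add, ← two_mul, pow_mul]; norm_num
    have hinv : (((-1:ℂ))^a0)⁻¹ = ((-1:ℂ))^a0 :=
      inv_eq_of_mul_eq_one_right hsq
    have h1 : (∏ j ∈ E, (γ j : ℂ) ^ γ j) = W := by
      rw [hWdef]
      apply Finset.prod_congr rfl
      intro j hj
      obtain ⟨t, ht⟩ : ∃ t : ℕ, γ j = (t : ℤ) := ⟨(γ j).toNat, hajeq j hj⟩
      rw [ht]
      simp [zpow_natCast]
    have h2 : ((-1:ℂ)) ^ (γ 0) = ((-1:ℂ))^a0 := by
      rw [hγ0eq, zpow_neg, zpow_natCast, ← inv_pow, inv_neg, inv_one]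
    have h3 : ((γ 0 : ℂ)) ^ (γ 0) = ((-1:ℂ))^a0 * (((a0:ℂ))^a0)⁻¹ := by
      rw [hγ0eq]
      push_cast
      rw [zpow_neg, zpow_natCast, neg_pow, mul_inv, hinv]
    rw [h2, h3, ← hEdef, h1, div_eq_mul_inv, ← mul_assoc, ← mul_assoc, hsq, one_mul, mul_comm]
  set Γc : ℂ := ∏ j, (γ j : ℂ) ^ γ j with hΓdef
  -- multinomial as factorial quotient
  have hmulspec : ∀ h : ℕ,
      (∏ j ∈ E, (((γ j).toNat * h).factorial : ℂ)) *
        (Nat.multinomial E (fun j => (γ j * h).toNat) : ℂ) = ((a0 * h).factorial : ℂ) := by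
    intro h
    have hc : Nat.multinomial E (fun j => (γ j * h).toNat)
        = Nat.multinomial E (fun j => (γ j).toNat * h) := by
      apply Nat.multinomial_congr
      intro j hj
      rw [hajeq j hj, ← Nat.cast_mul, Int.toNat_natCast, Int.toNat_natCast]
    rw [hc]
    have hspec := Nat.multinomial_spec (s := E) (f := fun j => (γ j).toNat * h)
    have hsum2 : ∑ j ∈ E, (γ j).toNat * h = a0 * h := by rw [← Finset.sum_mul, hsum']
    rw [hsum2] at hspec
    exact_mod_cast congrArg (Nat.cast : ℕ → ℂ) hspec
  have hDne : ∀ h : ℕ, (∏ j ∈ E, (((γ j).toNat * h).factorial : ℂ)) ≠ 0 := fun h =>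
    Finset.prod_ne_zero_iff.mpr fun j _ => Nat.cast_ne_zero.mpr (Nat.factorial_ne_zero _)
  have hBne : ∀ h : ℕ, (∏ i, (ascPochhammer ℂ h).eval (β i : ℂ)) ≠ 0 := by
    intro h
    apply Finset.prod_ne_zero_iff.mpr
    intro i _
    rw [poch_eval_prod]
    apply Finset.prod_ne_zero_iff.mpr
    intro k _
    intro hzero
    exact cast_add_nat_ne (β i) (hβ i).1 k (by rw [add_comm]; exact hzero)
  have main : ∀ h : ℕ,
      ((-1 : ℂ) ^ (γ 0 * h)) * (Nat.multinomial E (fun j => (γ j * h).toNat) : ℂ) * Γc ^ h *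
        (∏ i, (ascPochhammer ℂ h).eval (β i : ℂ)) = ∏ i, (ascPochhammer ℂ h).eval (α i : ℂ) := by
    intro h
    induction h with
    | zero => simp [Nat.multinomial]
    | succ h ih =>
      have keyh := key h
      set Ph : ℂ := ∏ m ∈ Finset.range a0, ((a0:ℂ) * h + m + 1) with hPhdef
      set Qh : ℂ := ∏ j ∈ E, ∏ m ∈ Finset.range (γ j).toNat,
        (((γ j).toNat : ℂ) * h + m + 1) with hQhdef
      set P'h : ℂ := ∏ m ∈ Finset.range a0, ((h:ℂ) + ((((m:ℚ)+1)/a0 : ℚ) : ℂ)) with hP'def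
      set Q'h : ℂ := ∏ j ∈ E, ∏ m ∈ Finset.range (γ j).toNat,
        ((h:ℂ) + ((((m:ℚ)+1)/(γ j).toNat : ℚ) : ℂ)) with hQ'def
      set Aδ : ℂ := ∏ i, ((h:ℂ) + (α i : ℂ)) with hAδdef
      set Bδ : ℂ := ∏ i, ((h:ℂ) + (β i : ℂ)) with hBδdef
      have hQhne : Qh ≠ 0 := by
        rw [hQhdef]
        apply Finset.prod_ne_zero_iff.mpr
        intro j hj
        apply Finset.prod_ne_zero_iff.mpr
        intro m _
        have hne : ((((γ j).toNat * h + m + 1 : ℕ)) : ℂ) ≠ 0 := Nat.cast_ne_zero.mpr (by omega)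
        push_cast at hne
        intro hzero; apply hne; rw [← hzero]
      have e1 : (∏ i, (ascPochhammer ℂ (h+1)).eval (α i : ℂ))
          = (∏ i, (ascPochhammer ℂ h).eval (α i : ℂ)) * Aδ := by
        rw [hAδdef, ← Finset.prod_mul_distrib]
        apply Finset.prod_congr rfl
        intro i _
        rw [ascPochhammer_succ_right, eval_mul]
        congr 1
        simp [eval_add, eval_X, eval_natCast]
        ring
      have e2 : (∏ i, (ascPochhammer ℂ (h+1)).eval (β i : ℂ))
          = (∏ i, (ascPochhammer ℂ h).eval (β i : ℂ)) * Bδ := by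
        rw [hBδdef, ← Finset.prod_mul_distrib]
        apply Finset.prod_congr rfl
        intro i _
        rw [ascPochhammer_succ_right, eval_mul]
        congr 1
        simp [eval_add, eval_X, eval_natCast]
        ring
      have e3 : ((-1:ℂ)) ^ (γ 0 * ((h+1 : ℕ) : ℤ))
          = ((-1:ℂ)) ^ (γ 0 * (h : ℤ)) * ((-1:ℂ)) ^ (γ 0) := by
        rw [← zpow_add₀ (by norm_num : (-1:ℂ) ≠ 0)]
        congr 1
        push_cast
        ring
      have hfacsplit : ((a0 * (h+1)).factorial : ℂ) = ((a0 * h).factorial : ℂ) * Ph := by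
        have harith : a0 * (h+1) = a0 * h + a0 := by ring
        rw [harith, fact_prod, hPhdef]
        congr 1
        apply Finset.prod_congr rfl
        intro m _
        push_cast
        ring
      have hDsplit : (∏ j ∈ E, (((γ j).toNat * (h+1)).factorial : ℂ))
          = (∏ j ∈ E, (((γ j).toNat * h).factorial : ℂ)) * Qh := by
        rw [hQhdef, ← Finset.prod_mul_distrib]
        apply Finset.prod_congr rfl
        intro j hj
        have harith : (γ j).toNat * (h+1) = (γ j).toNat * h + (γ j).toNat := by ring
        rw [harith, fact_prod]
        congr 1
        apply Finset.prod_congr rfl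
        intro m _
        push_cast
        ring
      have e4 : (Nat.multinomial E (fun j => (γ j * ((h+1:ℕ) : ℤ)).toNat) : ℂ) * Qh
          = (Nat.multinomial E (fun j => (γ j * (h : ℤ)).toNat) : ℂ) * Ph := by
        apply mul_left_cancel₀ (hDne h)
        have h1 := hmulspec (h+1)
        have h2 := hmulspec h
        rw [hDsplit, hfacsplit] at h1
        linear_combination h1 - Ph * h2
      have e5 : Ph = (a0:ℂ) ^ a0 * P'h := prod_lin a0 h ha0pos
      have e6 : Qh = W * Q'h := by
        rw [hQhdef, hQ'def, hWdef, ← Finset.prod_mul_distrib]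
        apply Finset.prod_congr rfl
        intro j hj
        exact prod_lin (γ j).toNat h (hajpos j hj)
      have e7 : ((-1:ℂ)) ^ (γ 0) * Γc * Ph * Bδ = Qh * Aδ := by
        rw [e5, e6]
        calc ((-1:ℂ)) ^ (γ 0) * Γc * ((a0:ℂ) ^ a0 * P'h) * Bδ
            = (((-1:ℂ)) ^ (γ 0) * Γc) * (a0:ℂ) ^ a0 * (P'h * Bδ) := by ring
          _ = (W / (a0:ℂ)^a0) * (a0:ℂ) ^ a0 * (P'h * Bδ) := by rw [hsΓ]
          _ = W * (P'h * Bδ) := by field_simp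
          _ = W * (Q'h * Aδ) := by rw [keyh]
          _ = W * Q'h * Aδ := by ring
      have dagger : ((-1:ℂ)) ^ (γ 0) * Γc *
          (Nat.multinomial E (fun j => (γ j * ((h+1:ℕ) : ℤ)).toNat) : ℂ) * Bδ
          = (Nat.multinomial E (fun j => (γ j * (h : ℤ)).toNat) : ℂ) * Aδ := by
        apply mul_right_cancel₀ hQhne
        linear_combination (((-1:ℂ)) ^ (γ 0) * Γc * Bδ) * e4
          + (Nat.multinomial E (fun j => (γ j * (h : ℤ)).toNat) : ℂ) * e7
      rw [e1, e2, e3, pow_succ]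
      linear_combination Aδ * ih
        + (((-1:ℂ)) ^ (γ 0 * (h : ℤ)) * Γc ^ h *
            (∏ i, (ascPochhammer ℂ h).eval (β i : ℂ))) * dagger
  intro h
  rw [eq_div_iff (hBne h)]
  exact main h
end

section
/- Let η, γ ∈ ℂ^l and suppose a function g(u) on (ℂ^×)^l satisfies, for constants β_0, β_1, …, β_d: ∑_j θ_j g = −β_0 g and ∑_j m_{ij} θ_j g = −β_i g for i = 1,…,d (θ_j = u_j ∂/∂u_j), where the joint kernel of the linear functionals (1,…,1) and rows of (m_{ij}) on ℂ^l is spanned by γ. Then g(u) = u^η h(z) where z = u^γ = ∏ u_j^{γ_j}, η is any solution of ∑ η_j = −β_0, ∑ m_{ij} η_j = −β_i, and h is a function of one variable. Moreover, if g additionally satisfies ∏_{γ_j>0} ∂_j^{γ_j} g = ∏_{γ_j<0} ∂_j^{−γ_j} g, then h is annihilated by the hypergeometric-type operator Γ ∏_{γ_i>0} ∏_{j=0}^{γ_i−1}(θ + (η_i − j)/γ_i) − z ∏_{γ_i<0} ∏_{j=0}^{−γ_i−1}(θ + (η_i − j)/γ_i), where θ = z d/dz and Γ = ∏ γ_i^{γ_i}.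 -/
open Finset

/-- Logarithmic partial `∂/∂u_j` (ordinary partial derivative) of a function on `ℂ^l`. -/
noncomputable def partialDeriv (l : ℕ) (j : Fin l) (f : (Fin l → ℂ) → ℂ) :
    (Fin l → ℂ) → ℂ :=
  fun u => fderiv ℂ f u (Pi.single j 1)

/-- Iterated partial derivatives `∏_j ∂_j^{e_j}` (exponents `e_j ≥ 0`). -/
noncomputable def boxOp (l : ℕ) (e : Fin l → ℕ) (f : (Fin l → ℂ) → ℂ) :
    (Fin l → ℂ) → ℂ :=
  (List.finRange l).foldr (fun j F => (partialDeriv l j)^[e j] F) f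

/-- The one–variable operator `θ + c` with `θ = z d/dz`. -/
noncomputable def thetaAdd (c : ℂ) (f : ℂ → ℂ) : ℂ → ℂ :=
  fun z => z * deriv f z + c * f z

/-- The list of shifts `(η_i − j)/γ_i`, `0 ≤ j < e_i`, used in the factored
hypergeometric operator. -/
noncomputable def shiftList (l : ℕ) (γ η : Fin l → ℤ) (e : Fin l → ℕ) : List ℂ :=
  (List.finRange l).foldr
    (fun i acc =>
      ((List.range (e i)).map fun j => ((η i : ℂ) - (j : ℂ)) / (γ i : ℂ)) ++ acc) []

section OneVar

lemma analyticAt_deriv {f : ℂ → ℂ} {z : ℂ} (h : AnalyticAt ℂ f z) :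
    AnalyticAt ℂ (deriv f) z := by
  have h1 : AnalyticAt ℂ (fderiv ℂ f) z := h.fderiv
  have h2 : AnalyticAt ℂ (fun w => fderiv ℂ f w 1) z :=
    (ContinuousLinearMap.apply ℂ ℂ (1:ℂ)).analyticAt _ |>.comp h1
  simpa [fderiv_apply_one_eq_deriv] using h2

lemma thetaAdd_analyticAt {f : ℂ → ℂ} {z : ℂ} (c : ℂ) (h : AnalyticAt ℂ f z) :
    AnalyticAt ℂ (thetaAdd c f) z := by
  unfold thetaAdd
  exact ((analyticAt_id.mul (analyticAt_deriv h)).add (analyticAt_const.mul h))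

lemma thetaAdd_congr {F G : ℂ → ℂ} {z : ℂ} (c : ℂ) (h : F =ᶠ[nhds z] G) :
    thetaAdd c F z = thetaAdd c G z := by
  unfold thetaAdd
  rw [h.deriv_eq, h.self_of_nhds]

lemma deriv_thetaAdd {h : ℂ → ℂ} {z : ℂ} (c : ℂ) (hh : AnalyticAt ℂ h z) :
    deriv (thetaAdd c h) z = deriv h z + z * deriv (deriv h) z + c * deriv h z := by
  have hd : AnalyticAt ℂ (deriv h) z := analyticAt_deriv hh
  unfold thetaAdd
  rw [deriv_fun_add (differentiableAt_fun_id.fun_mul hd.differentiableAt) (hh.differentiableAt.const_mul c),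
      deriv_fun_mul differentiableAt_fun_id hd.differentiableAt, deriv_const_mul c hh.differentiableAt,
      deriv_id'']
  ring

lemma thetaAdd_swap {h : ℂ → ℂ} {z : ℂ} (a b : ℂ) (hh : AnalyticAt ℂ h z) :
    thetaAdd a (thetaAdd b h) z = thetaAdd b (thetaAdd a h) z := by
  show z * deriv (thetaAdd b h) z + a * thetaAdd b h z
      = z * deriv (thetaAdd a h) z + b * thetaAdd a h z
  rw [deriv_thetaAdd b hh, deriv_thetaAdd a hh]
  show _ + a * (z * deriv h z + b * h z) = _ + b * (z * deriv h z + a * h z)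
  ring

lemma foldr_thetaAdd_analyticAt {h : ℂ → ℂ} {z : ℂ} (L : List ℂ) (hh : AnalyticAt ℂ h z) :
    AnalyticAt ℂ (L.foldr thetaAdd h) z := by
  induction L with
  | nil => exact hh
  | cons c L ih => exact thetaAdd_analyticAt c ih

lemma foldr_thetaAdd_perm {h : ℂ → ℂ} {S : Set ℂ} (hS : IsOpen S)
    (hh : ∀ z ∈ S, AnalyticAt ℂ h z) {L₁ L₂ : List ℂ} (hp : L₁.Perm L₂) :
    ∀ z ∈ S, L₁.foldr thetaAdd h z = L₂.foldr thetaAdd h z := by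
  induction hp with
  | nil => intro z hz; rfl
  | cons c _ ih =>
      intro z hz
      exact thetaAdd_congr c (Filter.eventuallyEq_of_mem (hS.mem_nhds hz) ih)
  | swap a b L =>
      intro z hz
      exact thetaAdd_swap b a (foldr_thetaAdd_analyticAt L (hh z hz))
  | trans _ _ ih1 ih2 => intro z hz; rw [ih1 z hz, ih2 z hz]

lemma foldr_thetaAdd_const_mul {h : ℂ → ℂ} {S : Set ℂ} (hS : IsOpen S)
    (hh : ∀ z ∈ S, AnalyticAt ℂ h z) (a : ℂ) (L : List ℂ) :
    ∀ z ∈ S, L.foldr thetaAdd (fun w => a * h w) z = a * L.foldr thetaAdd h z := by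
  induction L with
  | nil => intro z hz; rfl
  | cons c L ih =>
      intro z hz
      have h1 : thetaAdd c (L.foldr thetaAdd fun w => a * h w) z
          = thetaAdd c (fun w => a * L.foldr thetaAdd h w) z :=
        thetaAdd_congr c (Filter.eventuallyEq_of_mem (hS.mem_nhds hz) ih)
      rw [List.foldr_cons, h1]
      show z * deriv (fun w => a * L.foldr thetaAdd h w) z + c * (a * _) = _
      rw [deriv_const_mul a (foldr_thetaAdd_analyticAt L (hh z hz)).differentiableAt]
      show z * (a * deriv (L.foldr thetaAdd h) z) + _
          = a * (z * deriv (L.foldr thetaAdd h) z + c * _)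
      ring

lemma isOpen_ne_zero : IsOpen {z : ℂ | z ≠ 0} := isOpen_compl_singleton

end OneVar

section MultiVar

variable {l : ℕ}

lemma isOpen_torus : IsOpen {u : Fin l → ℂ | ∀ j, u j ≠ 0} := by
  have : {u : Fin l → ℂ | ∀ j, u j ≠ 0} = ⋂ j, {u | u j ≠ 0} := by
    ext u; simp
  rw [this]
  exact isOpen_iInter_of_finite fun j =>
    isOpen_compl_singleton.preimage (continuous_apply j)

lemma prodPow_ne_zero (e : Fin l → ℤ) {u : Fin l → ℂ} (hu : ∀ j, u j ≠ 0) :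
    (∏ i, u i ^ e i) ≠ 0 :=
  Finset.prod_ne_zero_iff.2 fun i _ => zpow_ne_zero _ (hu i)

lemma prodPow_hasFDerivAt (e : Fin l → ℤ) (u : Fin l → ℂ) (hu : ∀ j, u j ≠ 0) :
    ∃ D : (Fin l → ℂ) →L[ℂ] ℂ, HasFDerivAt (fun v => ∏ i, v i ^ e i) D u ∧
      ∀ j, D (Pi.single j 1) = (e j : ℂ) * (u j)⁻¹ * ∏ i, u i ^ e i := by
  classical
  set g' : Fin l → (Fin l → ℂ) →L[ℂ] ℂ :=
    fun i => ((e i : ℂ) * u i ^ (e i - 1)) • (ContinuousLinearMap.proj i) with hg'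
  have hgi : ∀ i ∈ Finset.univ, HasFDerivAt (fun v : Fin l → ℂ => v i ^ e i) (g' i) u := by
    intro i _
    have hproj : HasFDerivAt (fun v : Fin l → ℂ => v i)
        (ContinuousLinearMap.proj i : (Fin l → ℂ) →L[ℂ] ℂ) u :=
      hasFDerivAt_apply i u
    exact (hasDerivAt_zpow (e i) (u i) (Or.inl (hu i))).comp_hasFDerivAt u hproj
  refine ⟨_, HasFDerivAt.finset_prod hgi, ?_⟩
  intro j
  rw [ContinuousLinearMap.sum_apply]
  rw [Finset.sum_eq_single j]
  · simp only [ContinuousLinearMap.smul_apply, hg', ContinuousLinearMap.smul_apply,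
      ContinuousLinearMap.proj_apply, Pi.single_eq_same, smul_eq_mul, mul_one]
    rw [zpow_sub_one₀ (hu j), ← Finset.mul_prod_erase Finset.univ _ (Finset.mem_univ j)]
    ring
  · intro i _ hij
    simp only [hg', ContinuousLinearMap.smul_apply, ContinuousLinearMap.proj_apply,
      smul_eq_mul]
    rw [Pi.single_eq_of_ne hij, mul_zero, mul_zero]
  · simp

lemma prodPow_update {e : Fin l → ℤ} {u : Fin l → ℂ} (hu : ∀ j, u j ≠ 0) (j : Fin l) (n : ℤ) :
    (∏ i, u i ^ (Function.update e j n) i) = (u j ^ (n - e j)) * ∏ i, u i ^ e i := by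
  classical
  rw [← Finset.mul_prod_erase Finset.univ _ (Finset.mem_univ j),
      ← Finset.mul_prod_erase Finset.univ (fun i => u i ^ e i) (Finset.mem_univ j)]
  have : ∀ i ∈ Finset.univ.erase j, u i ^ (Function.update e j n) i = u i ^ e i := by
    intro i hi
    rw [Function.update_of_ne (Finset.mem_erase.1 hi).1]
  rw [Finset.prod_congr rfl this, Function.update_self, ← mul_assoc,
      ← zpow_add₀ (hu j), sub_add_cancel]

lemma partialDeriv_rep (γ η' : Fin l → ℤ) (hγ0 : ∀ j, γ j ≠ 0)
    (h : ℂ → ℂ) (hh : ∀ z : ℂ, z ≠ 0 → AnalyticAt ℂ h z)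
    (f : (Fin l → ℂ) → ℂ)
    (hf : ∀ u : Fin l → ℂ, (∀ j, u j ≠ 0) →
      f u = (∏ i, u i ^ η' i) * h (∏ i, u i ^ γ i)) (j : Fin l) :
    ∀ u : Fin l → ℂ, (∀ j, u j ≠ 0) →
      partialDeriv l j f u =
        (∏ i, u i ^ (Function.update η' j (η' j - 1)) i) *
          ((γ j : ℂ) * thetaAdd ((η' j : ℂ) / (γ j : ℂ)) h (∏ i, u i ^ γ i)) := by
  intro u hu
  set z₀ := ∏ i, u i ^ γ i with hz₀def
  have hz₀ : z₀ ≠ 0 := prodPow_ne_zero γ hu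
  set expr : (Fin l → ℂ) → ℂ :=
    fun v => (∏ i, v i ^ η' i) * h (∏ i, v i ^ γ i) with hexpr
  have hev : f =ᶠ[nhds u] expr :=
    Filter.eventuallyEq_of_mem (isOpen_torus.mem_nhds hu) hf
  obtain ⟨Dη, hDη, hDηval⟩ := prodPow_hasFDerivAt η' u hu
  obtain ⟨Dγ, hDγ, hDγval⟩ := prodPow_hasFDerivAt γ u hu
  have hhz : HasDerivAt h (deriv h z₀) z₀ := (hh z₀ hz₀).differentiableAt.hasDerivAt
  have hcomp : HasFDerivAt (fun v => h (∏ i, v i ^ γ i)) ((deriv h z₀) • Dγ) u :=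
    hhz.comp_hasFDerivAt u hDγ
  have hexprD : HasFDerivAt expr
      ((∏ i, u i ^ η' i) • ((deriv h z₀) • Dγ) + (h z₀) • Dη) u := hDη.mul hcomp
  have : partialDeriv l j f u =
      ((∏ i, u i ^ η' i) • ((deriv h z₀) • Dγ) + (h z₀) • Dη) (Pi.single j 1) := by
    unfold partialDeriv
    rw [hev.fderiv_eq, hexprD.fderiv]
  rw [this]
  rw [ContinuousLinearMap.add_apply, ContinuousLinearMap.smul_apply,
    ContinuousLinearMap.smul_apply, ContinuousLinearMap.smul_apply,
    hDηval j, hDγval j, prodPow_update hu j (η' j - 1)]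
  have hγj : (γ j : ℂ) ≠ 0 := Int.cast_ne_zero.2 (hγ0 j)
  have he : η' j - 1 - η' j = -1 := by ring
  rw [he, zpow_neg_one]
  unfold thetaAdd
  field_simp
  ring

lemma iterate_rep (γ : Fin l → ℤ) (hγ0 : ∀ j, γ j ≠ 0) (j : Fin l) (k : ℕ) :
    ∀ (η' : Fin l → ℤ) (h : ℂ → ℂ), (∀ z : ℂ, z ≠ 0 → AnalyticAt ℂ h z) →
    ∀ f : (Fin l → ℂ) → ℂ,
      (∀ u : Fin l → ℂ, (∀ j, u j ≠ 0) →
        f u = (∏ i, u i ^ η' i) * h (∏ i, u i ^ γ i)) →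
    ∀ u : Fin l → ℂ, (∀ j, u j ≠ 0) →
      ((partialDeriv l j)^[k] f) u
        = (∏ i, u i ^ (Function.update η' j (η' j - k)) i) *
          ((γ j : ℂ) ^ k *
            ((((List.range k).map fun t => ((η' j : ℂ) - t) / (γ j : ℂ)).reverse).foldr
              thetaAdd h) (∏ i, u i ^ γ i)) := by
  induction k with
  | zero =>
      intro η' h hh f hf u hu
      simpa using hf u hu
  | succ k ih =>
      intro η' h hh f hf u hu
      have hz₀ : (∏ i, u i ^ γ i) ≠ 0 := prodPow_ne_zero γ hu
      set Rk := (((List.range k).map fun t => ((η' j : ℂ) - t) / (γ j : ℂ)).reverse)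
        with hRk
      set h₁ : ℂ → ℂ := fun z => (γ j : ℂ) ^ k * (Rk.foldr thetaAdd h) z with hh₁def
      have hh₁ : ∀ z : ℂ, z ≠ 0 → AnalyticAt ℂ h₁ z := fun z hz =>
        analyticAt_const.mul (foldr_thetaAdd_analyticAt Rk (hh z hz))
      have hfk : ∀ u : Fin l → ℂ, (∀ j, u j ≠ 0) →
          ((partialDeriv l j)^[k] f) u
            = (∏ i, u i ^ (Function.update η' j (η' j - k)) i) * h₁ (∏ i, u i ^ γ i) :=
        fun u hu => ih η' h hh f hf u hu
      rw [Function.iterate_succ_apply']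
      rw [partialDeriv_rep γ (Function.update η' j (η' j - k)) hγ0 h₁ hh₁ _ hfk j u hu]
      rw [Function.update_self, Function.update_idem]
      have harith : η' j - k - 1 = η' j - (k + 1 : ℕ) := by push_cast; ring
      rw [harith]
      congr 1
      -- remaining: the one-variable functions agree at z₀
      have hlist : (((List.range (k+1)).map
            fun t => ((η' j : ℂ) - t) / (γ j : ℂ)).reverse)
          = (((η' j : ℂ) - k) / (γ j : ℂ)) :: Rk := by
        rw [hRk, List.range_succ]
        simp
      rw [hlist]
      have hpull : thetaAdd ((((η' j - k : ℤ) : ℂ)) / (γ j : ℂ)) h₁ (∏ i, u i ^ γ i)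
          = (γ j : ℂ) ^ k * thetaAdd ((((η' j : ℂ) - k)) / (γ j : ℂ))
              (Rk.foldr thetaAdd h) (∏ i, u i ^ γ i) := by
        have hcast : (((η' j - k : ℤ) : ℂ)) = (η' j : ℂ) - k := by push_cast; ring
        rw [hcast]
        exact foldr_thetaAdd_const_mul isOpen_ne_zero
          (fun z hz => foldr_thetaAdd_analyticAt Rk (hh z hz)) ((γ j : ℂ) ^ k)
          [(((η' j : ℂ) - k)) / (γ j : ℂ)] _ hz₀
      rw [hpull]
      rw [List.foldr_cons]
      ring
end MultiVar

section Fold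

variable {l : ℕ}

lemma fold_rep (γ : Fin l → ℤ) (hγ0 : ∀ j, γ j ≠ 0) (e : Fin l → ℕ)
    (L : List (Fin l)) (hL : L.Nodup) :
    ∀ (η' : Fin l → ℤ) (h : ℂ → ℂ), (∀ z : ℂ, z ≠ 0 → AnalyticAt ℂ h z) →
    ∀ f : (Fin l → ℂ) → ℂ,
      (∀ u : Fin l → ℂ, (∀ j, u j ≠ 0) →
        f u = (∏ i, u i ^ η' i) * h (∏ i, u i ^ γ i)) →
    ∀ u : Fin l → ℂ, (∀ j, u j ≠ 0) →
      (L.foldr (fun j F => (partialDeriv l j)^[e j] F) f) u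
        = (∏ i, u i ^ (if i ∈ L then η' i - e i else η' i)) *
          ((∏ i ∈ L.toFinset, (γ i : ℂ) ^ (e i)) *
            ((L.foldr (fun i acc =>
                ((List.range (e i)).map fun t => ((η' i : ℂ) - t) / (γ i : ℂ)) ++ acc)
              []).foldr thetaAdd h) (∏ i, u i ^ γ i)) := by
  classical
  induction L with
  | nil =>
      intro η' h hh f hf u hu
      simpa using hf u hu
  | cons j L ihL =>
      intro η' h hh f hf u hu
      have hjL : j ∉ L := (List.nodup_cons.1 hL).1
      have hLnd : L.Nodup := (List.nodup_cons.1 hL).2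
      have hz₀ : (∏ i, u i ^ γ i) ≠ 0 := prodPow_ne_zero γ hu
      set SL := (L.foldr (fun i acc =>
          ((List.range (e i)).map fun t => ((η' i : ℂ) - t) / (γ i : ℂ)) ++ acc) [])
        with hSL
      set CL := (∏ i ∈ L.toFinset, (γ i : ℂ) ^ (e i)) with hCL
      set hL' : ℂ → ℂ := fun z => CL * (SL.foldr thetaAdd h) z with hhL'
      have hhL'a : ∀ z : ℂ, z ≠ 0 → AnalyticAt ℂ hL' z := fun z hz =>
        analyticAt_const.mul (foldr_thetaAdd_analyticAt SL (hh z hz))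
      set ηL : Fin l → ℤ := fun i => if i ∈ L then η' i - e i else η' i with hηL
      have hrepL : ∀ u : Fin l → ℂ, (∀ j, u j ≠ 0) →
          (L.foldr (fun j F => (partialDeriv l j)^[e j] F) f) u
            = (∏ i, u i ^ ηL i) * hL' (∏ i, u i ^ γ i) :=
        fun u hu => ihL hLnd η' h hh f hf u hu
      rw [List.foldr_cons]
      rw [iterate_rep γ hγ0 j (e j) ηL hL' hhL'a _ hrepL u hu]
      have hηLj : ηL j = η' j := by simp [hηL, hjL]
      -- exponent function
      have hexp : Function.update ηL j (ηL j - e j)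
          = fun i => if i ∈ j :: L then η' i - e i else η' i := by
        funext i
        by_cases hij : i = j
        · subst hij
          simp [Function.update_self, hηLj]
        · simp only [Function.update_of_ne hij, hηL, List.mem_cons]
          by_cases hiL : i ∈ L <;> simp [hiL, hij]
      rw [hexp, hηLj]
      congr 1
      -- one-variable side
      set Bj := ((List.range (e j)).map fun t => ((η' j : ℂ) - t) / (γ j : ℂ)) with hBj
      have hG : ∀ z : ℂ, z ≠ 0 → AnalyticAt ℂ (SL.foldr thetaAdd h) z := fun z hz =>
        foldr_thetaAdd_analyticAt SL (hh z hz)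
      have hpull : (Bj.reverse.foldr thetaAdd hL') (∏ i, u i ^ γ i)
          = CL * (Bj.reverse.foldr thetaAdd (SL.foldr thetaAdd h)) (∏ i, u i ^ γ i) :=
        foldr_thetaAdd_const_mul isOpen_ne_zero hG CL Bj.reverse _ hz₀
      have hperm : (Bj.reverse.foldr thetaAdd (SL.foldr thetaAdd h)) (∏ i, u i ^ γ i)
          = (Bj.foldr thetaAdd (SL.foldr thetaAdd h)) (∏ i, u i ^ γ i) :=
        foldr_thetaAdd_perm isOpen_ne_zero hG (List.reverse_perm Bj) _ hz₀
      have happ : (Bj.foldr thetaAdd (SL.foldr thetaAdd h))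
          = ((Bj ++ SL).foldr thetaAdd h) := by
        rw [List.foldr_append]
      have htoF : ((j :: L).toFinset : Finset (Fin l)) = insert j L.toFinset := by
        simp
      rw [List.foldr_cons, hpull, hperm, happ, htoF,
        Finset.prod_insert (by simpa using hjL)]
      ring

end Fold

section Aux
variable {l : ℕ}

lemma bezout_finset {ι : Type*} [DecidableEq ι] (s : Finset ι) (f : ι → ℤ) :
    ∃ c : ι → ℤ, ∑ i ∈ s, c i * f i = s.gcd f := by
  classical
  induction s using Finset.induction_on with
  | empty => exact ⟨fun _ => 0, by simp⟩
  | insert j s hjs ih =>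
      obtain ⟨c, hc⟩ := ih
      set A := (f j).gcdA (s.gcd f) with hA
      set B := (f j).gcdB (s.gcd f) with hB
      refine ⟨fun x => if x = j then A else B * c x, ?_⟩
      rw [Finset.sum_insert hjs, Finset.gcd_insert]
      have h1 : ∀ x ∈ s, (if x = j then A else B * c x) * f x = B * (c x * f x) := by
        intro x hx
        rw [if_neg (by rintro rfl; exact hjs hx)]
        ring
      rw [Finset.sum_congr rfl h1, ← Finset.mul_sum, hc]
      simp only [if_true, eq_self_iff_true]
      have hbez := Int.gcd_eq_gcd_ab (f j) (s.gcd f)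
      rw [← Int.coe_gcd, hbez, hA, hB]
      ring

lemma zpow_prod_eq {z : ℂ} (hz : z ≠ 0) (s : Finset (Fin l)) (e : Fin l → ℤ) :
    ∏ i ∈ s, z ^ e i = z ^ (∑ i ∈ s, e i) := by
  classical
  induction s using Finset.induction_on with
  | empty => simp
  | insert j s hjs ih =>
      rw [Finset.prod_insert hjs, Finset.sum_insert hjs, zpow_add₀ hz, ih]

lemma vec_eq_sum_single (v : Fin l → ℂ) : v = ∑ i, (v i) • (Pi.single i (1 : ℂ) : Fin l → ℂ) := by
  funext j
  rw [Finset.sum_apply]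
  rw [Finset.sum_eq_single j]
  · simp
  · intro i _ hij
    simp [Pi.single_eq_of_ne (Ne.symm hij)]
  · simp

end Aux

open Complex in
theorem exists_rep (l d : ℕ)
    (γ η : Fin l → ℤ) (hgcd : Finset.univ.gcd γ = 1)
    (m : Fin d → Fin l → ℂ) (β0 : ℂ) (βv : Fin d → ℂ)
    (hker : ∀ w : Fin l → ℂ,
      ((∑ j, w j = 0) ∧ ∀ i, ∑ j, m i j * w j = 0) ↔
        ∃ c : ℂ, w = fun j => c * (γ j : ℂ))
    (hη0 : (∑ j, (η j : ℂ)) = -β0)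
    (hηi : ∀ i, (∑ j, m i j * (η j : ℂ)) = -βv i)
    (g : (Fin l → ℂ) → ℂ)
    (hg : ∀ u : Fin l → ℂ, (∀ j, u j ≠ 0) → AnalyticAt ℂ g u)
    (hE0 : ∀ u : Fin l → ℂ, (∀ j, u j ≠ 0) →
      (∑ j, u j * partialDeriv l j g u) = -β0 * g u)
    (hEi : ∀ u : Fin l → ℂ, (∀ j, u j ≠ 0) →
      ∀ i, (∑ j, m i j * (u j * partialDeriv l j g u)) = -βv i * g u) :
    ∃ h : ℂ → ℂ, (∀ z : ℂ, z ≠ 0 → AnalyticAt ℂ h z) ∧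
      (∀ u : Fin l → ℂ, (∀ j, u j ≠ 0) →
        g u = (∏ j, u j ^ η j) * h (∏ j, u j ^ γ j)) := by
  classical
  -- the exponential chart and the auxiliary function ψ
  set E : (Fin l → ℂ) → (Fin l → ℂ) := fun x j => Complex.exp (x j) with hE
  set L : (Fin l → ℂ) →L[ℂ] ℂ :=
    ∑ j, (-(η j : ℂ)) • (ContinuousLinearMap.proj j) with hL
  have hLapply : ∀ x, L x = ∑ j, (-(η j : ℂ)) * x j := by
    intro x
    rw [hL]
    simp [ContinuousLinearMap.sum_apply]
  set ψ : (Fin l → ℂ) → ℂ := fun x => g (E x) * Complex.exp (L x) with hψ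
  have hEtorus : ∀ x : Fin l → ℂ, ∀ j, E x j ≠ 0 := fun x j => Complex.exp_ne_zero _
  -- ψ is entire
  have hψa : ∀ x, AnalyticAt ℂ ψ x := by
    intro x
    have hEa : AnalyticAt ℂ E x := by
      apply AnalyticAt.pi
      intro j
      exact analyticAt_cexp.comp
        ((ContinuousLinearMap.proj j : (Fin l → ℂ) →L[ℂ] ℂ).analyticAt x)
    have h1 : AnalyticAt ℂ (fun y => g (E y)) x := (hg (E x) (hEtorus x)).comp hEa
    have h2 : AnalyticAt ℂ (fun y => Complex.exp (L y)) x :=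
      analyticAt_cexp.comp (L.analyticAt x)
    exact h1.mul h2
  -- derivative of E
  have hDE : ∀ x : Fin l → ℂ, HasFDerivAt E
      (ContinuousLinearMap.pi fun j =>
        (Complex.exp (x j)) • (ContinuousLinearMap.proj j : (Fin l → ℂ) →L[ℂ] ℂ)) x := by
    intro x
    apply hasFDerivAt_pi''
    intro i
    rw [ContinuousLinearMap.proj_pi]
    exact (Complex.hasDerivAt_exp (x i)).comp_hasFDerivAt x (hasFDerivAt_apply i x)
  -- derivative of ψ, evaluated on basis vectors
  have hψd : ∀ x : Fin l → ℂ, ∀ j, fderiv ℂ ψ x (Pi.single j 1)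
      = (E x j * partialDeriv l j g (E x)) * Complex.exp (L x)
        - (η j : ℂ) * ψ x := by
    intro x j
    set DE := (ContinuousLinearMap.pi fun j =>
      (Complex.exp (x j)) • (ContinuousLinearMap.proj j : (Fin l → ℂ) →L[ℂ] ℂ)) with hDEdef
    have hgd : HasFDerivAt g (fderiv ℂ g (E x)) (E x) :=
      (hg (E x) (hEtorus x)).differentiableAt.hasFDerivAt
    have hcomp : HasFDerivAt (fun y => g (E y)) ((fderiv ℂ g (E x)).comp DE) x :=
      hgd.comp x (hDE x)
    have hexpL : HasFDerivAt (fun y => Complex.exp (L y))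
        (Complex.exp (L x) • (L : (Fin l → ℂ) →L[ℂ] ℂ)) x :=
      (Complex.hasDerivAt_exp (L x)).comp_hasFDerivAt x L.hasFDerivAt
    have hmul := hcomp.mul hexpL
    have hfd : fderiv ℂ ψ x = (g (E x)) • (Complex.exp (L x) • (L : (Fin l → ℂ) →L[ℂ] ℂ))
        + (Complex.exp (L x)) • ((fderiv ℂ g (E x)).comp DE) := hmul.fderiv
    rw [hψ]
    rw [hfd]
    have hDEj : DE (Pi.single j 1) = (Complex.exp (x j)) • (Pi.single j 1 : Fin l → ℂ) := by
      funext i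
      rw [hDEdef]
      simp only [ContinuousLinearMap.pi_apply, ContinuousLinearMap.smul_apply,
        ContinuousLinearMap.proj_apply, Pi.smul_apply, smul_eq_mul]
      by_cases hij : i = j
      · subst hij; simp
      · simp [Pi.single_eq_of_ne hij]
    have hLj : L (Pi.single j 1) = -(η j : ℂ) := by
      rw [hL]
      rw [ContinuousLinearMap.sum_apply]
      rw [Finset.sum_eq_single j]
      · simp
      · intro i _ hij
        simp only [ContinuousLinearMap.smul_apply, ContinuousLinearMap.proj_apply,
          smul_eq_mul]
        rw [Pi.single_eq_of_ne hij]
        simp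
      · simp
    rw [ContinuousLinearMap.add_apply, ContinuousLinearMap.smul_apply,
      ContinuousLinearMap.smul_apply, ContinuousLinearMap.smul_apply,
      ContinuousLinearMap.comp_apply, hDEj, hLj, map_smul]
    unfold partialDeriv
    simp only [smul_eq_mul]
    ring
  -- gradient of ψ is parallel to γ
  have hgrad : ∀ x : Fin l → ℂ, ∃ c : ℂ,
      (fun j => fderiv ℂ ψ x (Pi.single j 1)) = fun j => c * (γ j : ℂ) := by
    intro x
    apply (hker _).1
    constructor
    · have := hE0 (E x) (hEtorus x)
      have hsum : ∑ j, fderiv ℂ ψ x (Pi.single j 1)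
          = (∑ j, E x j * partialDeriv l j g (E x)) * Complex.exp (L x)
            - (∑ j, (η j : ℂ)) * ψ x := by
        rw [Finset.sum_congr rfl fun j _ => hψd x j]
        rw [Finset.sum_sub_distrib, ← Finset.sum_mul, ← Finset.sum_mul]
      rw [hsum, this, hη0, hψ]
      ring
    · intro i
      have := hEi (E x) (hEtorus x) i
      have hterm : ∀ j ∈ Finset.univ, m i j * fderiv ℂ ψ x (Pi.single j 1)
          = (m i j * (E x j * partialDeriv l j g (E x))) * Complex.exp (L x)
            - (m i j * (η j : ℂ)) * ψ x := by
        intro j _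
        rw [hψd x j]
        ring
      have hsum : ∑ j, m i j * fderiv ℂ ψ x (Pi.single j 1)
          = (∑ j, m i j * (E x j * partialDeriv l j g (E x))) * Complex.exp (L x)
            - (∑ j, m i j * (η j : ℂ)) * ψ x := by
        rw [Finset.sum_congr rfl hterm, Finset.sum_sub_distrib,
          ← Finset.sum_mul, ← Finset.sum_mul]
      rw [hsum, this, hηi i, hψ]
      ring
  -- ψ is constant on level sets of γ · x
  have hconst : ∀ x y : Fin l → ℂ,
      (∑ j, (γ j : ℂ) * x j) = (∑ j, (γ j : ℂ) * y j) → ψ x = ψ y := by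
    intro x y hxy
    set A : ℂ → (Fin l → ℂ) := fun t => x + t • (y - x) with hA
    have hAd : ∀ t : ℂ, HasDerivAt A (y - x) t := by
      intro t
      have : HasDerivAt (fun t : ℂ => t • (y - x)) (y - x) t := by
        simpa using (hasDerivAt_id t).smul_const (y - x)
      simpa [hA] using this.const_add x
    have hφd : ∀ t : ℂ, HasDerivAt (fun s => ψ (A s)) (fderiv ℂ ψ (A t) (y - x)) t := by
      intro t
      exact ((hψa (A t)).differentiableAt.hasFDerivAt).comp_hasDerivAt t (hAd t)
    have hzero : ∀ t : ℂ, fderiv ℂ ψ (A t) (y - x) = 0 := by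
      intro t
      obtain ⟨c, hc⟩ := hgrad (A t)
      have hvx := vec_eq_sum_single (y - x)
      calc fderiv ℂ ψ (A t) (y - x)
          = ∑ j, (y - x) j * fderiv ℂ ψ (A t) (Pi.single j 1) := by
            conv_lhs => rw [hvx]
            rw [map_sum]
            apply Finset.sum_congr rfl
            intro j _
            rw [map_smul, smul_eq_mul]
        _ = ∑ j, (y - x) j * (c * (γ j : ℂ)) := by
            apply Finset.sum_congr rfl
            intro j _
            rw [congrFun hc j]
        _ = c * ((∑ j, (γ j : ℂ) * y j) - (∑ j, (γ j : ℂ) * x j)) := by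
            rw [← Finset.sum_sub_distrib, Finset.mul_sum]
            apply Finset.sum_congr rfl
            intro j _
            simp only [Pi.sub_apply]
            ring
        _ = 0 := by rw [hxy]; ring
    have hdiff : Differentiable ℂ (fun s => ψ (A s)) := fun t => (hφd t).differentiableAt
    have hderiv0 : ∀ t, deriv (fun s => ψ (A s)) t = 0 := by
      intro t
      rw [(hφd t).deriv, hzero t]
    have h0 : A 0 = x := by rw [hA]; simp
    have h1 : A 1 = y := by rw [hA]; simp
    have := is_const_of_deriv_eq_zero hdiff hderiv0 0 1
    rw [h0, h1] at this
    exact this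
  -- Bezout coefficients
  obtain ⟨a, ha⟩ := bezout_finset Finset.univ γ
  rw [hgcd] at ha
  -- the one-variable function H and its 2πi-periodicity
  set H : ℂ → ℂ := fun s => ψ (fun j => s * (a j : ℂ)) with hH
  have hψshift : ∀ (x : Fin l → ℂ) (n : ℤ),
      ψ (fun j => x j + ((n : ℂ) * (2 * (Real.pi : ℂ) * Complex.I)) * (a j : ℂ)) = ψ x := by
    intro x n
    set x' : Fin l → ℂ :=
      fun j => x j + ((n : ℂ) * (2 * (Real.pi : ℂ) * Complex.I)) * (a j : ℂ) with hx'
    have hEeq : E x' = E x := by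
      funext j
      rw [hE]
      simp only [hx']
      rw [Complex.exp_add]
      have hc : ((n : ℂ) * (2 * (Real.pi : ℂ) * Complex.I)) * (a j : ℂ)
          = ((n * a j : ℤ) : ℂ) * (2 * (Real.pi : ℂ) * Complex.I) := by
        push_cast; ring
      rw [hc, Complex.exp_int_mul_two_pi_mul_I, mul_one]
    have hLeq : L x' = L x + ((n * (-∑ j, η j * a j) : ℤ) : ℂ)
        * (2 * (Real.pi : ℂ) * Complex.I) := by
      rw [hLapply, hLapply]
      simp only [hx']
      have hterm : ∀ j ∈ Finset.univ, (-(η j : ℂ)) *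
            (x j + ((n : ℂ) * (2 * (Real.pi : ℂ) * Complex.I)) * (a j : ℂ))
          = (-(η j : ℂ)) * x j
            + (-((η j * a j * n : ℤ) : ℂ)) * (2 * (Real.pi : ℂ) * Complex.I) := by
        intro j _
        push_cast
        ring
      rw [Finset.sum_congr rfl hterm, Finset.sum_add_distrib]
      congr 1
      rw [← Finset.sum_mul]
      congr 1
      norm_cast
      rw [mul_neg, Finset.mul_sum, ← Finset.sum_neg_distrib]
      exact Finset.sum_congr rfl fun j _ => by ring
    rw [hψ]
    simp only []
    rw [hEeq, hLeq, Complex.exp_add, Complex.exp_int_mul_two_pi_mul_I, mul_one]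
  -- properties of H
  have hHa : ∀ s : ℂ, AnalyticAt ℂ H s := by
    intro s
    have hmap : AnalyticAt ℂ (fun s : ℂ => (fun j => s * (a j : ℂ) : Fin l → ℂ)) s :=
      AnalyticAt.pi fun j => analyticAt_id.mul analyticAt_const
    exact (hψa _).comp hmap
  have hHper : ∀ (s : ℂ) (n : ℤ), H (s + (n : ℂ) * (2 * (Real.pi : ℂ) * Complex.I)) = H s := by
    intro s n
    rw [hH]
    simp only []
    have hfun : (fun j => (s + (n : ℂ) * (2 * (Real.pi : ℂ) * Complex.I)) * (a j : ℂ))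
        = fun j => (s * (a j : ℂ))
            + ((n : ℂ) * (2 * (Real.pi : ℂ) * Complex.I)) * (a j : ℂ) :=
      funext fun j => by ring
    rw [hfun]
    exact hψshift (fun j => s * (a j : ℂ)) n
  have hHexpEq : ∀ s s' : ℂ, Complex.exp s = Complex.exp s' → H s = H s' := by
    intro s s' hss
    obtain ⟨k, hk⟩ := Complex.exp_eq_exp_iff_exists_int.1 hss
    rw [hk, hHper]
  have hHexp : ∀ x : Fin l → ℂ, ψ x = H (∑ j, (γ j : ℂ) * x j) := by
    intro x
    rw [hH]
    simp only []
    apply hconst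
    have hsum : (∑ j, (γ j : ℂ) * (a j : ℂ)) = 1 := by
      have := congrArg (Int.cast : ℤ → ℂ) ha
      push_cast at this
      rw [← this]
      exact Finset.sum_congr rfl fun j _ => by ring
    have hre : ∀ j ∈ Finset.univ,
        (γ j : ℂ) * ((∑ i, (γ i : ℂ) * x i) * (a j : ℂ))
          = (∑ i, (γ i : ℂ) * x i) * ((γ j : ℂ) * (a j : ℂ)) := fun j _ => by ring
    rw [Finset.sum_congr rfl hre, ← Finset.mul_sum, hsum, mul_one]
  refine ⟨fun z => H (Complex.log z), ?_, ?_⟩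
  · -- analyticity
    intro z hz
    by_cases hm : z ∈ Complex.slitPlane
    · exact (hHa _).comp (analyticAt_clog hm)
    · have hzre : (-z) ∈ Complex.slitPlane := by
        rw [Complex.mem_slitPlane_iff] at hm ⊢
        push_neg at hm
        left
        simp only [Complex.neg_re]
        have hre : z.re ≠ 0 := fun h0 => hz (Complex.ext h0 hm.2)
        have := lt_of_le_of_ne hm.1 hre
        linarith
      have hG : AnalyticAt ℂ
          (fun w => H (Complex.log (-w) + (Real.pi : ℂ) * Complex.I)) z := by
        apply (hHa _).comp
        exact ((analyticAt_clog hzre).comp (analyticAt_id.neg)).add analyticAt_const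
      apply hG.congr
      apply Filter.eventuallyEq_of_mem (isOpen_compl_singleton.mem_nhds hz)
      intro w hw
      have hw0 : w ≠ 0 := hw
      apply hHexpEq
      rw [Complex.exp_add, Complex.exp_log (neg_ne_zero.2 hw0), Complex.exp_pi_mul_I,
        Complex.exp_log hw0]
      ring
  · -- representation
    intro u hu
    set x : Fin l → ℂ := fun j => Complex.log (u j) with hx
    have hEx : E x = u := funext fun j => Complex.exp_log (hu j)
    have hψx : ψ x = g u * Complex.exp (L x) := by
      rw [hψ]
      simp only []
      rw [hEx]
    have hPne : (∏ j, u j ^ η j) ≠ 0 :=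
      Finset.prod_ne_zero_iff.2 fun j _ => zpow_ne_zero _ (hu j)
    have hexpL : Complex.exp (L x) = (∏ j, u j ^ η j)⁻¹ := by
      rw [hLapply, Complex.exp_sum, ← Finset.prod_inv_distrib]
      apply Finset.prod_congr rfl
      intro j _
      have : (-(η j : ℂ)) * x j = ((-η j : ℤ) : ℂ) * Complex.log (u j) := by
        rw [hx]; push_cast; ring
      rw [this, Complex.exp_int_mul, Complex.exp_log (hu j), zpow_neg]
    have hzne : (∏ j, u j ^ γ j) ≠ 0 :=
      Finset.prod_ne_zero_iff.2 fun j _ => zpow_ne_zero _ (hu j)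
    have hlog : Complex.exp (Complex.log (∏ j, u j ^ γ j))
        = Complex.exp (∑ j, (γ j : ℂ) * x j) := by
      rw [Complex.exp_log hzne, Complex.exp_sum]
      apply Finset.prod_congr rfl
      intro j _
      rw [hx]
      simp only []
      rw [Complex.exp_int_mul, Complex.exp_log (hu j)]
    have hkey : H (Complex.log (∏ j, u j ^ γ j)) = H (∑ j, (γ j : ℂ) * x j) :=
      hHexpEq _ _ hlog
    show g u = (∏ j, u j ^ η j) * H (Complex.log (∏ j, u j ^ γ j))
    rw [hkey, ← hHexp x, hψx, hexpL]
    field_simp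

/-- **Reduction of the circuit GKZ system to a hypergeometric ODE.**
Suppose `g`, analytic on the torus `(ℂ^×)^l`, satisfies the Euler equations
`∑_j θ_j g = −β₀ g` and `∑_j m_{ij} θ_j g = −β_i g` (`θ_j = u_j ∂/∂u_j`), where
the joint kernel of `(1,…,1)` and the rows of `(m_{ij})` on `ℂ^l` is spanned by
the (primitive, nowhere-zero) integer vector `γ`, and `η ∈ ℤ^l` solves
`∑ η_j = −β₀`, `∑ m_{ij} η_j = −β_i`.  Then `g(u) = u^η h(u^γ)` for a function
`h` of one variable, analytic on `ℂ^×`; and if moreover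
`∏_{γ_j>0} ∂_j^{γ_j} g = ∏_{γ_j<0} ∂_j^{−γ_j} g`, then `h` is annihilated by
`Γ ∏_{γ_i>0} ∏_{j<γ_i} (θ + (η_i−j)/γ_i) − z ∏_{γ_i<0} ∏_{j<−γ_i} (θ + (η_i−j)/γ_i)`
with `Γ = ∏ γ_i^{γ_i}`. -/
theorem gkz_reduction_to_hypergeometric (l d : ℕ)
    (γ η : Fin l → ℤ) (hγ0 : ∀ j, γ j ≠ 0) (hgcd : Finset.univ.gcd γ = 1)
    (m : Fin d → Fin l → ℂ) (β0 : ℂ) (βv : Fin d → ℂ)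
    (hker : ∀ w : Fin l → ℂ,
      ((∑ j, w j = 0) ∧ ∀ i, ∑ j, m i j * w j = 0) ↔
        ∃ c : ℂ, w = fun j => c * (γ j : ℂ))
    (hη0 : (∑ j, (η j : ℂ)) = -β0)
    (hηi : ∀ i, (∑ j, m i j * (η j : ℂ)) = -βv i)
    (g : (Fin l → ℂ) → ℂ)
    (hg : ∀ u : Fin l → ℂ, (∀ j, u j ≠ 0) → AnalyticAt ℂ g u)
    (hE0 : ∀ u : Fin l → ℂ, (∀ j, u j ≠ 0) →
      (∑ j, u j * partialDeriv l j g u) = -β0 * g u)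
    (hEi : ∀ u : Fin l → ℂ, (∀ j, u j ≠ 0) →
      ∀ i, (∑ j, m i j * (u j * partialDeriv l j g u)) = -βv i * g u) :
    ∃ h : ℂ → ℂ, (∀ z : ℂ, z ≠ 0 → AnalyticAt ℂ h z) ∧
      (∀ u : Fin l → ℂ, (∀ j, u j ≠ 0) →
        g u = (∏ j, u j ^ η j) * h (∏ j, u j ^ γ j)) ∧
      ((∀ u : Fin l → ℂ, (∀ j, u j ≠ 0) →
          boxOp l (fun j => (γ j).toNat) g u = boxOp l (fun j => (-γ j).toNat) g u) →
        ∀ z : ℂ, z ≠ 0 →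
          (∏ j, (γ j : ℂ) ^ γ j) *
              ((shiftList l γ η fun j => (γ j).toNat).foldr thetaAdd h) z -
            z * ((shiftList l γ η fun j => (-γ j).toNat).foldr thetaAdd h) z = 0) := by
  classical
  obtain ⟨h, hha, hrep⟩ := exists_rep l d γ η hgcd m β0 βv hker hη0 hηi g hg hE0 hEi
  refine ⟨h, hha, hrep, ?_⟩
  intro hbox z hz
  -- Bezout coefficients and the point u over z
  obtain ⟨a, ha⟩ := bezout_finset Finset.univ γ
  rw [hgcd] at ha
  set u : Fin l → ℂ := fun j => z ^ (a j) with hudef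
  have hu : ∀ j, u j ≠ 0 := fun j => zpow_ne_zero _ hz
  have huz : (∏ j, u j ^ γ j) = z := by
    have : ∀ j ∈ Finset.univ, u j ^ γ j = z ^ (a j * γ j) := by
      intro j _
      rw [hudef]
      rw [← zpow_mul]
    rw [Finset.prod_congr rfl this, zpow_prod_eq hz, ha, zpow_one]
  set ep : Fin l → ℕ := fun j => (γ j).toNat with hep
  set en : Fin l → ℕ := fun j => (-γ j).toNat with hen
  have hbu := hbox u hu
  have hrepP := fold_rep γ hγ0 ep (List.finRange l) (List.nodup_finRange l)
    η h hha g hrep u hu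
  have hrepN := fold_rep γ hγ0 en (List.finRange l) (List.nodup_finRange l)
    η h hha g hrep u hu
  simp only [List.mem_finRange, if_true, List.toFinset_finRange] at hrepP hrepN
  unfold boxOp at hbu
  rw [hrepP, hrepN, huz] at hbu
  set Cp := ∏ i, (γ i : ℂ) ^ (ep i) with hCp
  set Cn := ∏ i, (γ i : ℂ) ^ (en i) with hCn
  have hγC : ∀ i, (γ i : ℂ) ≠ 0 := fun i => Int.cast_ne_zero.2 (hγ0 i)
  have hCnne : Cn ≠ 0 := Finset.prod_ne_zero_iff.2 fun i _ => pow_ne_zero _ (hγC i)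
  set Fp := ((shiftList l γ η ep).foldr thetaAdd h) z with hFp
  set Fn := ((shiftList l γ η en).foldr thetaAdd h) z with hFn
  have hFpdef : ((List.finRange l).foldr (fun i acc =>
      ((List.range (ep i)).map fun t => ((η i : ℂ) - t) / (γ i : ℂ)) ++ acc)
      []).foldr thetaAdd h z = Fp := rfl
  have hFndef : ((List.finRange l).foldr (fun i acc =>
      ((List.range (en i)).map fun t => ((η i : ℂ) - t) / (γ i : ℂ)) ++ acc)
      []).foldr thetaAdd h z = Fn := rfl
  rw [hFpdef, hFndef] at hbu
  set P := ∏ i, u i ^ (η i - (en i : ℤ)) with hP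
  have hPne : P ≠ 0 := Finset.prod_ne_zero_iff.2 fun i _ => zpow_ne_zero _ (hu i)
  have hsplit : (∏ i, u i ^ (η i - (ep i : ℤ))) = P * z⁻¹ := by
    have hfac : ∀ i ∈ Finset.univ,
        u i ^ (η i - (ep i : ℤ)) = u i ^ (η i - (en i : ℤ)) * u i ^ (-γ i) := by
      intro i _
      rw [← zpow_add₀ (hu i)]
      congr 1
      simp only [hep, hen]
      omega
    rw [Finset.prod_congr rfl hfac, Finset.prod_mul_distrib]
    congr 1
    have : ∀ i ∈ Finset.univ, u i ^ (-γ i) = (u i ^ γ i)⁻¹ := by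
      intro i _
      rw [zpow_neg]
    rw [Finset.prod_congr rfl this, Finset.prod_inv_distrib, huz]
  rw [hsplit] at hbu
  have h1 : Cp * Fp = z * (Cn * Fn) := by
    have h0 : P * (Cp * Fp) = z * (P * (Cn * Fn)) := by
      have := congrArg (fun w => z * w) hbu
      rw [← this]
      field_simp
    have h0' : P * (Cp * Fp) = P * (z * (Cn * Fn)) := by rw [h0]; ring
    exact mul_left_cancel₀ hPne h0'
  have hΓ : (∏ j, (γ j : ℂ) ^ γ j) * Cn = Cp := by
    rw [hCp, hCn, ← Finset.prod_mul_distrib]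
    apply Finset.prod_congr rfl
    intro i _
    rw [← zpow_natCast (γ i : ℂ) (en i), ← zpow_natCast (γ i : ℂ) (ep i),
      ← zpow_add₀ (hγC i)]
    congr 1
    simp only [hep, hen]
    omega
  have h2 : Cn * ((∏ j, (γ j : ℂ) ^ γ j) * Fp - z * Fn) = 0 := by
    linear_combination Fp * hΓ + h1
  exact (mul_eq_zero.1 h2).resolve_left hCnne
end
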